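/- arXiv:2205.14466 — 2 statements merged into one kernel-verified Lean document; each statement's English description precedes it below -/
import Mathlib

section
/- For every integer n ≥ 4 there exists a constant c(n), depending only on n, such that every connected {K_n, S*_n, S̃_n, P_n}-free finite simple graph G satisfies insp(G) ≤ c(n). -/
open SimpleGraph

/-- `G` contains an induced subgraph isomorphic to `H`. -/
def HasInducedCopy {V W : Type*} (G : SimpleGraph V) (H : SimpleGraph W) : Prop :=
  ∃ f : W ↪ V, ∀ a b : W, G.Adj (f a) (f b) ↔ H.Adj a b

/-- The star `K_{1,m}` (one center plus `m` leaves). -/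
def starGraph (m : ℕ) : SimpleGraph (Unit ⊕ Fin m) := completeBipartiteGraph Unit (Fin m)

/-- `S` induces in `G` a subgraph isomorphic to a path `P_m` on `m ≥ 1` vertices. -/
def IsInducedPathSet {V : Type*} (G : SimpleGraph V) (S : Set V) : Prop :=
  ∃ m : ℕ, 1 ≤ m ∧ Nonempty ((G.induce S) ≃g pathGraph m)

/-- `S` induces in `G` a subgraph isomorphic to a star `K_{1,m}` with `m ≥ 1`. -/
def IsInducedStarSet {V : Type*} (G : SimpleGraph V) (S : Set V) : Prop :=
  ∃ m : ℕ, 1 ≤ m ∧ Nonempty ((G.induce S) ≃g _root_.starGraph m)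

/-- `S` consists of a single vertex (i.e. induces `K_1`). -/
def IsSingletonSet {V : Type*} (S : Set V) : Prop := ∃ v, S = {v}

/-- `S` is the vertex set of an isometric (shortest) path of `G`. -/
def IsIsometricPathSet {V : Type*} (G : SimpleGraph V) (S : Set V) : Prop :=
  ∃ (u v : V) (p : G.Walk u v), p.IsPath ∧ p.length = G.dist u v ∧
    S = {x | x ∈ p.support}

/-- `P` is a family of sets, all satisfying `pred`, whose union is all of `V`. -/
def IsCoverBy {V : Type*} (P : Finset (Set V)) (pred : Set V → Prop) : Prop :=
  (∀ S ∈ P, pred S) ∧ ∀ v : V, ∃ S ∈ P, v ∈ S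

/-- `P` is a cover by sets satisfying `pred`, whose members are pairwise disjoint. -/
def IsPartitionBy {V : Type*} (P : Finset (Set V)) (pred : Set V → Prop) : Prop :=
  IsCoverBy P pred ∧ ∀ S ∈ P, ∀ T ∈ P, S ≠ T → ∀ v, v ∈ S → v ∉ T

/-- Minimum cardinality of a cover by sets satisfying `pred`. -/
noncomputable def coverNumber {V : Type*} (pred : Set V → Prop) : ℕ :=
  sInf {k | ∃ P : Finset (Set V), P.card = k ∧ IsCoverBy P pred}

/-- Minimum cardinality of a partition into sets satisfying `pred`. -/
noncomputable def partitionNumber {V : Type*} (pred : Set V → Prop) : ℕ :=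
  sInf {k | ∃ P : Finset (Set V), P.card = k ∧ IsPartitionBy P pred}

/-- The induced SP-cover number. -/
noncomputable def inspc {V : Type*} (G : SimpleGraph V) : ℕ :=
  coverNumber (fun S => IsInducedStarSet G S ∨ IsInducedPathSet G S)

/-- The induced SP-partition number. -/
noncomputable def inspp {V : Type*} (G : SimpleGraph V) : ℕ :=
  partitionNumber (fun S => IsInducedStarSet G S ∨ IsInducedPathSet G S)

/-- The induced star cover number. -/
noncomputable def insc {V : Type*} (G : SimpleGraph V) : ℕ :=
  coverNumber (fun S => IsInducedStarSet G S ∨ IsSingletonSet S)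

/-- The induced star partition number. -/
noncomputable def insp {V : Type*} (G : SimpleGraph V) : ℕ :=
  partitionNumber (fun S => IsInducedStarSet G S ∨ IsSingletonSet S)

/-- The induced path cover number. -/
noncomputable def inpc {V : Type*} (G : SimpleGraph V) : ℕ :=
  coverNumber (fun S => IsInducedPathSet G S)

/-- The induced path partition number. -/
noncomputable def inpp {V : Type*} (G : SimpleGraph V) : ℕ :=
  partitionNumber (fun S => IsInducedPathSet G S)

/-- The isometric path cover number. -/
noncomputable def ispc {V : Type*} (G : SimpleGraph V) : ℕ :=
  coverNumber (fun S => IsIsometricPathSet G S)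

/-- The isometric path partition number. -/
noncomputable def ispp {V : Type*} (G : SimpleGraph V) : ℕ :=
  partitionNumber (fun S => IsIsometricPathSet G S)

/-- `S*_n` : center `x = inl ()`, middle vertices `y i = inr (inl i)`,
leaves `z i = inr (inr i)`; edges `x yᵢ` and `yᵢ zᵢ`. -/
def SStar (n : ℕ) : SimpleGraph (Unit ⊕ Fin n ⊕ Fin n) :=
  SimpleGraph.fromRel (fun a b =>
    (∃ i : Fin n, a = Sum.inl () ∧ b = Sum.inr (Sum.inl i)) ∨
    (∃ i : Fin n, a = Sum.inr (Sum.inl i) ∧ b = Sum.inr (Sum.inr i)))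

/-- `S̃_n` : `S*_n` together with the edges `x zᵢ`. -/
def STilde (n : ℕ) : SimpleGraph (Unit ⊕ Fin n ⊕ Fin n) :=
  SimpleGraph.fromRel (fun a b =>
    (∃ i : Fin n, a = Sum.inl () ∧ b = Sum.inr (Sum.inl i)) ∨
    (∃ i : Fin n, a = Sum.inr (Sum.inl i) ∧ b = Sum.inr (Sum.inr i)) ∨
    (∃ i : Fin n, a = Sum.inl () ∧ b = Sum.inr (Sum.inr i)))

/-- `F⁽¹⁾_n` : vertices `x₁ = inl 0`, `x₂ = inl 1`, `yᵢ = inr (inl i)`, `zᵢ = inr (inr i)`;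
edges `x₁x₂`, `x₁y₁`, `x₁z₁`, and two paths `y₁⋯yₙ`, `z₁⋯zₙ`. -/
def F1 (n : ℕ) : SimpleGraph (Fin 2 ⊕ Fin n ⊕ Fin n) :=
  SimpleGraph.fromRel (fun a b =>
    (a = Sum.inl 0 ∧ b = Sum.inl 1) ∨
    (∃ j : Fin n, (j : ℕ) = 0 ∧ a = Sum.inl 0 ∧ b = Sum.inr (Sum.inl j)) ∨
    (∃ j : Fin n, (j : ℕ) = 0 ∧ a = Sum.inl 0 ∧ b = Sum.inr (Sum.inr j)) ∨
    (∃ i j : Fin n, (i : ℕ) + 1 = (j : ℕ) ∧ a = Sum.inr (Sum.inl i) ∧ b = Sum.inr (Sum.inl j)) ∨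
    (∃ i j : Fin n, (i : ℕ) + 1 = (j : ℕ) ∧ a = Sum.inr (Sum.inr i) ∧ b = Sum.inr (Sum.inr j)))

/-- `F⁽²⁾_n` : vertex `x₁ = inl ()`, `yᵢ = inr (inl i)`, `zᵢ = inr (inr i)`;
edges `x₁y₁`, `x₁z₁`, `y₁z₁`, and two paths `y₁⋯yₙ`, `z₁⋯zₙ`. -/
def F2 (n : ℕ) : SimpleGraph (Unit ⊕ Fin n ⊕ Fin n) :=
  SimpleGraph.fromRel (fun a b =>
    (∃ j : Fin n, (j : ℕ) = 0 ∧ a = Sum.inl () ∧ b = Sum.inr (Sum.inl j)) ∨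
    (∃ j : Fin n, (j : ℕ) = 0 ∧ a = Sum.inl () ∧ b = Sum.inr (Sum.inr j)) ∨
    (∃ i j : Fin n, (i : ℕ) = 0 ∧ (j : ℕ) = 0 ∧ a = Sum.inr (Sum.inl i) ∧ b = Sum.inr (Sum.inr j)) ∨
    (∃ i j : Fin n, (i : ℕ) + 1 = (j : ℕ) ∧ a = Sum.inr (Sum.inl i) ∧ b = Sum.inr (Sum.inl j)) ∨
    (∃ i j : Fin n, (i : ℕ) + 1 = (j : ℕ) ∧ a = Sum.inr (Sum.inr i) ∧ b = Sum.inr (Sum.inr j)))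

/-- `F⁽³⁾_n` : vertices `xᵢ = inl i`, `yᵢ = inr (inl i)`, `zᵢ = inr (inr i)`;
edges `xᵢy₁`, `xᵢz₁` for all `i`, and two paths `y₁⋯yₙ`, `z₁⋯zₙ`. -/
def F3 (n : ℕ) : SimpleGraph (Fin n ⊕ Fin n ⊕ Fin n) :=
  SimpleGraph.fromRel (fun a b =>
    (∃ (i j : Fin n), (j : ℕ) = 0 ∧ a = Sum.inl i ∧ b = Sum.inr (Sum.inl j)) ∨
    (∃ (i j : Fin n), (j : ℕ) = 0 ∧ a = Sum.inl i ∧ b = Sum.inr (Sum.inr j)) ∨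
    (∃ i j : Fin n, (i : ℕ) + 1 = (j : ℕ) ∧ a = Sum.inr (Sum.inl i) ∧ b = Sum.inr (Sum.inl j)) ∨
    (∃ i j : Fin n, (i : ℕ) + 1 = (j : ℕ) ∧ a = Sum.inr (Sum.inr i) ∧ b = Sum.inr (Sum.inr j)))

/-- `F⁽⁴⁾_n` : `F⁽³⁾_n` with only `x₁, x₂` kept (no edge `x₁x₂`). -/
def F4 (n : ℕ) : SimpleGraph (Fin 2 ⊕ Fin n ⊕ Fin n) :=
  SimpleGraph.fromRel (fun a b =>
    (∃ (i : Fin 2) (j : Fin n), (j : ℕ) = 0 ∧ a = Sum.inl i ∧ b = Sum.inr (Sum.inl j)) ∨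
    (∃ (i : Fin 2) (j : Fin n), (j : ℕ) = 0 ∧ a = Sum.inl i ∧ b = Sum.inr (Sum.inr j)) ∨
    (∃ i j : Fin n, (i : ℕ) + 1 = (j : ℕ) ∧ a = Sum.inr (Sum.inl i) ∧ b = Sum.inr (Sum.inl j)) ∨
    (∃ i j : Fin n, (i : ℕ) + 1 = (j : ℕ) ∧ a = Sum.inr (Sum.inr i) ∧ b = Sum.inr (Sum.inr j)))

/-- `F⁽⁵⁾_n` : `F⁽⁴⁾_n` plus the edge `x₁x₂`. -/
def F5 (n : ℕ) : SimpleGraph (Fin 2 ⊕ Fin n ⊕ Fin n) :=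
  SimpleGraph.fromRel (fun a b =>
    (a = Sum.inl 0 ∧ b = Sum.inl 1) ∨
    (∃ (i : Fin 2) (j : Fin n), (j : ℕ) = 0 ∧ a = Sum.inl i ∧ b = Sum.inr (Sum.inl j)) ∨
    (∃ (i : Fin 2) (j : Fin n), (j : ℕ) = 0 ∧ a = Sum.inl i ∧ b = Sum.inr (Sum.inr j)) ∨
    (∃ i j : Fin n, (i : ℕ) + 1 = (j : ℕ) ∧ a = Sum.inr (Sum.inl i) ∧ b = Sum.inr (Sum.inl j)) ∨
    (∃ i j : Fin n, (i : ℕ) + 1 = (j : ℕ) ∧ a = Sum.inr (Sum.inr i) ∧ b = Sum.inr (Sum.inr j)))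

/-- The Ramsey number `R(a,b)` : least `R` such that every simple graph on at least `R`
vertices contains a clique of size `a` or an independent set of size `b`. -/
noncomputable def ramseyNumber (a b : ℕ) : ℕ :=
  sInf {R : ℕ | ∀ (m : ℕ) (G : SimpleGraph (Fin m)), R ≤ m →
    (∃ s : Finset (Fin m), s.card = a ∧ ∀ u ∈ s, ∀ v ∈ s, u ≠ v → G.Adj u v) ∨
    (∃ s : Finset (Fin m), s.card = b ∧ ∀ u ∈ s, ∀ v ∈ s, u ≠ v → ¬ G.Adj u v)}

/-- `ξ_{n,i} = ((R(n-1,n)-1)^i - 1)/(R(n-1,n)-2)`. -/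
noncomputable def xi (n i : ℕ) : ℕ :=
  ((ramseyNumber (n - 1) n - 1) ^ i - 1) / (ramseyNumber (n - 1) n - 2)


/-- Recursive Ramsey bound. -/
def RamB : ℕ → ℕ → ℕ
  | 0, _ => 0
  | _+1, 0 => 0
  | a+1, b+1 => RamB a (b+1) + RamB (a+1) b + 1

theorem ramB_spec {V : Type} [Fintype V] [DecidableEq V] (G : SimpleGraph V)
    [DecidableRel G.Adj] :
    ∀ (a b : ℕ) (s : Finset V), RamB a b ≤ s.card →
      (∃ t ⊆ s, t.card = a ∧ ∀ x ∈ t, ∀ y ∈ t, x ≠ y → G.Adj x y) ∨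
      (∃ t ⊆ s, t.card = b ∧ ∀ x ∈ t, ∀ y ∈ t, x ≠ y → ¬ G.Adj x y) := by
  intro a
  induction a with
  | zero =>
    intro b s _
    exact Or.inl ⟨∅, Finset.empty_subset s, rfl, by simp⟩
  | succ a iha =>
    intro b
    induction b with
    | zero =>
      intro s _
      exact Or.inr ⟨∅, Finset.empty_subset s, rfl, by simp⟩
    | succ b ihb =>
      intro s hs
      have hram : RamB (a+1) (b+1) = RamB a (b+1) + RamB (a+1) b + 1 := by simp [RamB]
      have hpos : 1 ≤ s.card := by omega
      obtain ⟨v, hv⟩ := Finset.card_pos.mp (show 0 < s.card by omega)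
      set A := (s.erase v).filter (fun u => G.Adj v u) with hA
      set B := (s.erase v).filter (fun u => ¬ G.Adj v u) with hB
      have hcards : A.card + B.card = (s.erase v).card := by
        rw [hA, hB]
        exact Finset.card_filter_add_card_filter_not (fun u => G.Adj v u)
      have herase : (s.erase v).card = s.card - 1 := Finset.card_erase_of_mem hv
      have hsplit : RamB a (b+1) ≤ A.card ∨ RamB (a+1) b ≤ B.card := by
        by_contra hcon
        push_neg at hcon
        omega
      rcases hsplit with h1 | h1
      · rcases iha (b+1) A h1 with ⟨t, hts, htc, htcl⟩ | ⟨t, hts, htc, htid⟩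
        · -- clique of size a in A, add v
          have hvt : v ∉ t := fun hvt => (Finset.mem_erase.mp
            (Finset.mem_of_mem_filter v (hts hvt))).1 rfl
          refine Or.inl ⟨insert v t, ?_, ?_, ?_⟩
          · intro x hx
            rcases Finset.mem_insert.mp hx with rfl | hx
            · exact hv
            · exact Finset.mem_of_mem_erase (Finset.mem_of_mem_filter x (hts hx))
          · rw [Finset.card_insert_of_notMem hvt, htc]
          · intro x hx y hy hxy
            have hvx : ∀ z, z ∈ t → G.Adj v z := fun z hz =>
              (Finset.mem_filter.mp (hts hz)).2
            rcases Finset.mem_insert.mp hx with hx' | hx' <;>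
              rcases Finset.mem_insert.mp hy with hy' | hy'
            · exact absurd (hx'.trans hy'.symm) hxy
            · subst hx'; exact hvx y hy'
            · subst hy'; exact (hvx x hx').symm
            · exact htcl x hx' y hy' hxy
        · exact Or.inr ⟨t, fun x hx => Finset.mem_of_mem_erase
            (Finset.mem_of_mem_filter x (hts hx)), htc, htid⟩
      · rcases ihb B h1 with ⟨t, hts, htc, htcl⟩ | ⟨t, hts, htc, htid⟩
        · exact Or.inl ⟨t, fun x hx => Finset.mem_of_mem_erase
            (Finset.mem_of_mem_filter x (hts hx)), htc, htcl⟩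
        · -- independent set of size b in B, add v
          have hvt : v ∉ t := fun hvt => (Finset.mem_erase.mp
            (Finset.mem_of_mem_filter v (hts hvt))).1 rfl
          refine Or.inr ⟨insert v t, ?_, ?_, ?_⟩
          · intro x hx
            rcases Finset.mem_insert.mp hx with rfl | hx
            · exact hv
            · exact Finset.mem_of_mem_erase (Finset.mem_of_mem_filter x (hts hx))
          · rw [Finset.card_insert_of_notMem hvt, htc]
          · intro x hx y hy hxy
            have hvx : ∀ z, z ∈ t → ¬ G.Adj v z := fun z hz =>
              (Finset.mem_filter.mp (hts hz)).2
            rcases Finset.mem_insert.mp hx with hx' | hx' <;>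
              rcases Finset.mem_insert.mp hy with hy' | hy'
            · exact absurd (hx'.trans hy'.symm) hxy
            · subst hx'; exact hvx y hy'
            · subst hy'; exact fun hadj => hvx x hx' hadj.symm
            · exact htid x hx' y hy' hxy
section Builders
variable {V : Type} {G : SimpleGraph V}

lemma hasCompleteCopy_of_clique {n : ℕ} (t : Finset V) (htc : t.card = n)
    (hcl : ∀ x ∈ t, ∀ y ∈ t, x ≠ y → G.Adj x y) :
    HasInducedCopy G (completeGraph (Fin n)) := by
  classical
  let e := Finset.equivFinOfCardEq htc
  refine ⟨⟨fun i => (e.symm i : V), fun i j hij => e.symm.injective (Subtype.ext hij)⟩, ?_⟩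
  intro a b
  simp only [Function.Embedding.coeFn_mk, completeGraph, top_adj]
  constructor
  · intro h hab
    exact G.ne_of_adj h (by rw [hab])
  · intro h
    refine hcl _ (e.symm a).2 _ (e.symm b).2 ?_
    intro hval
    exact h (e.symm.injective (Subtype.ext hval) |>.symm ▸ rfl)
end Builders
section StarBuilders
variable {V : Type} {G : SimpleGraph V}

lemma hasSStarCopy {n : ℕ} (x : V) (y z : Fin n → V)
    (hxy : ∀ i, G.Adj x (y i))
    (hyz : ∀ i, G.Adj (y i) (z i))
    (hxz : ∀ i, ¬ G.Adj x (z i)) (hxzne : ∀ i, x ≠ z i)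
    (hyy : ∀ i j, i ≠ j → ¬ G.Adj (y i) (y j)) (hyne : ∀ i j, i ≠ j → y i ≠ y j)
    (hzz : ∀ i j, i ≠ j → ¬ G.Adj (z i) (z j)) (hzne : ∀ i j, i ≠ j → z i ≠ z j)
    (hyznadj : ∀ i j, i ≠ j → ¬ G.Adj (y i) (z j)) :
    HasInducedCopy G (SStar n) := by
  classical
  have hxyne : ∀ i, x ≠ y i := fun i => G.ne_of_adj (hxy i)
  have hyzne : ∀ i j, y i ≠ z j := fun i j h => hxz j (h ▸ hxy i)
  let f : Unit ⊕ Fin n ⊕ Fin n → V := Sum.elim (fun _ => x) (Sum.elim y z)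
  have hinj : Function.Injective f := by
    rintro (⟨⟩|i|i) (⟨⟩|j|j) hab <;>
      simp only [f, Sum.elim_inl, Sum.elim_inr] at hab
    · rfl
    · exact absurd hab (hxyne j)
    · exact absurd hab (hxzne j)
    · exact absurd hab.symm (hxyne i)
    · have : i = j := by by_contra hne; exact hyne i j hne hab
      rw [this]
    · exact absurd hab (hyzne i j)
    · exact absurd hab.symm (hxzne i)
    · exact absurd hab.symm (hyzne j i)
    · have : i = j := by by_contra hne; exact hzne i j hne hab
      rw [this]
  refine ⟨⟨f, hinj⟩, ?_⟩
  rintro (⟨⟩|i|i) (⟨⟩|j|j) <;>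
    simp only [Function.Embedding.coeFn_mk, f, Sum.elim_inl, Sum.elim_inr, SStar,
      SimpleGraph.fromRel_adj, Sum.inr.injEq, Sum.inl.injEq, ne_eq,
      reduceCtorEq, exists_eq_left', exists_and_left, exists_false, exists_eq',
      and_true, true_and, false_and, and_false, or_false, false_or, not_false_iff,
      not_true, iff_true, iff_false, Sum.inl.injEq]
  · exact G.irrefl
  · exact hxy j
  · exact hxz j
  · exact (hxy i).symm
  · by_cases h : i = j
    · subst h; exact G.irrefl
    · exact hyy i j h
  · constructor
    · intro h
      by_contra hne
      exact hyznadj i j (fun e => hne e.symm) h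
    · rintro rfl
      exact hyz j
  · exact fun h => hxz i h.symm
  · constructor
    · intro h
      by_contra hne
      exact hyznadj j i (fun e => hne e.symm) h.symm
    · rintro rfl
      exact (hyz i).symm
  · by_cases h : i = j
    · subst h; exact G.irrefl
    · exact hzz i j h
end StarBuilders
section StildeBuilder
variable {V : Type} {G : SimpleGraph V}

lemma hasSTildeCopy {n : ℕ} (x : V) (y z : Fin n → V)
    (hxy : ∀ i, G.Adj x (y i))
    (hyz : ∀ i, G.Adj (y i) (z i))
    (hxz : ∀ i, G.Adj x (z i))
    (hyy : ∀ i j, i ≠ j → ¬ G.Adj (y i) (y j)) (hyne : ∀ i j, i ≠ j → y i ≠ y j)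
    (hzz : ∀ i j, i ≠ j → ¬ G.Adj (z i) (z j)) (hzne : ∀ i j, i ≠ j → z i ≠ z j)
    (hyznadj : ∀ i j, i ≠ j → ¬ G.Adj (y i) (z j)) :
    HasInducedCopy G (STilde n) := by
  classical
  have hxyne : ∀ i, x ≠ y i := fun i => G.ne_of_adj (hxy i)
  have hxzne : ∀ i, x ≠ z i := fun i => G.ne_of_adj (hxz i)
  have hyzne : ∀ i j, y i ≠ z j := by
    intro i j h
    by_cases hij : i = j
    · subst hij; exact G.irrefl (h ▸ hyz i)
    · exact hyy j i (fun e => hij e.symm) (h ▸ hyz j)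
  let f : Unit ⊕ Fin n ⊕ Fin n → V := Sum.elim (fun _ => x) (Sum.elim y z)
  have hinj : Function.Injective f := by
    rintro (⟨⟩|i|i) (⟨⟩|j|j) hab <;>
      simp only [f, Sum.elim_inl, Sum.elim_inr] at hab
    · rfl
    · exact absurd hab (hxyne j)
    · exact absurd hab (hxzne j)
    · exact absurd hab.symm (hxyne i)
    · have : i = j := by by_contra hne; exact hyne i j hne hab
      rw [this]
    · exact absurd hab (hyzne i j)
    · exact absurd hab.symm (hxzne i)
    · exact absurd hab.symm (hyzne j i)
    · have : i = j := by by_contra hne; exact hzne i j hne hab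
      rw [this]
  refine ⟨⟨f, hinj⟩, ?_⟩
  rintro (⟨⟩|i|i) (⟨⟩|j|j) <;>
    simp only [Function.Embedding.coeFn_mk, f, Sum.elim_inl, Sum.elim_inr, STilde,
      SimpleGraph.fromRel_adj, Sum.inr.injEq, Sum.inl.injEq, ne_eq,
      reduceCtorEq, exists_eq_left', exists_and_left, exists_false, exists_eq',
      and_true, true_and, false_and, and_false, or_false, false_or, not_false_iff,
      not_true, iff_true, iff_false]
  · exact G.irrefl
  · exact hxy j
  · exact hxz j
  · exact (hxy i).symm
  · by_cases h : i = j
    · subst h; exact G.irrefl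
    · exact hyy i j h
  · constructor
    · intro h
      by_contra hne
      exact hyznadj i j (fun e => hne e.symm) h
    · rintro rfl
      exact hyz j
  · exact (hxz i).symm
  · constructor
    · intro h
      by_contra hne
      exact hyznadj j i (fun e => hne e.symm) h.symm
    · rintro rfl
      exact (hyz i).symm
  · by_cases h : i = j
    · subst h; exact G.irrefl
    · exact hzz i j h
end StildeBuilder
section DistSec
variable {V : Type} {G : SimpleGraph V}

lemma geo_seq (hconn : G.Connected) :
    ∀ (L : ℕ) (u w : V), G.dist u w = L →
      ∃ g : ℕ → V, g 0 = u ∧ g L = w ∧ (∀ i < L, G.Adj (g i) (g (i+1))) ∧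
        (∀ i ≤ L, G.dist u (g i) = i ∧ G.dist (g i) w = L - i) := by
  intro L
  induction L with
  | zero =>
    intro u w h
    have huw : u = w := (hconn.dist_eq_zero_iff).mp h
    subst huw
    exact ⟨fun _ => u, rfl, rfl, fun i hi => absurd hi (Nat.not_lt_zero i),
      fun i hi => by simp [Nat.le_zero.mp hi, SimpleGraph.dist_self]⟩
  | succ L ih =>
    intro u w h
    obtain ⟨p, hp⟩ := hconn.exists_walk_length_eq_dist u w
    rw [h] at hp
    cases p with
    | nil => simp at hp
    | @cons _ x _ hadj q =>
      have hq : q.length = L := by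
        simpa using hp
      have hux : G.dist u x ≤ 1 := by
        have := SimpleGraph.dist_le (SimpleGraph.Walk.cons hadj SimpleGraph.Walk.nil)
        simpa using this
      have hxw_le : G.dist x w ≤ L := hq ▸ SimpleGraph.dist_le q
      have hxw : G.dist x w = L := by
        have htri := hconn.dist_triangle (u := u) (v := x) (w := w)
        omega
      obtain ⟨g', hg0, hgL, hgadj, hgd⟩ := ih x w hxw
      refine ⟨fun i => if i = 0 then u else g' (i-1), by simp, ?_, ?_, ?_⟩
      · simp [hgL]
      · intro i hi
        rcases Nat.eq_zero_or_pos i with rfl | hipos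
        · simpa [hg0] using hadj
        · have h1 : ¬ (i = 0) := by omega
          have h2 : ¬ (i + 1 = 0) := by omega
          simp only [h1, h2, if_false]
          have := hgadj (i-1) (by omega)
          have heq : i - 1 + 1 = i := by omega
          rwa [heq] at this
      · intro i hi
        rcases Nat.eq_zero_or_pos i with rfl | hipos
        · simp [SimpleGraph.dist_self, h]
        · have h1 : ¬ (i = 0) := by omega
          simp only [h1, if_false]
          obtain ⟨hd1, hd2⟩ := hgd (i-1) (by omega)
          have hle : G.dist u (g' (i-1)) ≤ i := by
            have htri := hconn.dist_triangle (u := u) (v := x) (w := g' (i-1))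
            omega
        -- lower bound via distance to w
          have hge : i ≤ G.dist u (g' (i-1)) := by
            have htri := hconn.dist_triangle (u := u) (v := g' (i-1)) (w := w)
            omega
          constructor
          · omega
          · omega
end DistSec
section DiamSec
variable {V : Type} {G : SimpleGraph V}

lemma dist_small_of_no_path {n : ℕ} (hn : 2 ≤ n) (hconn : G.Connected)
    (hP : ¬ HasInducedCopy G (pathGraph n)) :
    ∀ u w : V, G.dist u w ≤ n - 2 := by
  intro u w
  by_contra hbig
  push_neg at hbig
  set L := G.dist u w with hL
  have hLn : n - 1 ≤ L := by omega
  obtain ⟨g, hg0, hgL, hgadj, hgd⟩ := geo_seq hconn L u w rfl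
  have hmono : ∀ i j : ℕ, i ≤ j → j ≤ L → j - i ≤ G.dist (g i) (g j) := by
    intro i j hij hjL
    have h1 := (hgd i (by omega)).1
    have h2 := (hgd j hjL).1
    have htri := hconn.dist_triangle (u := u) (v := g i) (w := g j)
    omega
  apply hP
  refine ⟨⟨fun i : Fin n => g i, ?_⟩, ?_⟩
  · intro i j hij
    rcases Nat.lt_trichotomy (i : ℕ) (j : ℕ) with hlt | heq | hgt
    · exfalso
      have h2 := hmono i j (by omega) (by omega)
      have h3 : g (i : ℕ) = g (j : ℕ) := hij
      rw [h3, SimpleGraph.dist_self] at h2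
      omega
    · exact Fin.ext heq
    · exfalso
      have h2 := hmono j i (by omega) (by omega)
      have h3 : g (i : ℕ) = g (j : ℕ) := hij
      rw [h3, SimpleGraph.dist_self] at h2
      omega
  · intro a b
    show G.Adj (g a) (g b) ↔ (pathGraph n).Adj a b
    rw [pathGraph_adj]
    constructor
    · intro hadj
      rcases Nat.lt_trichotomy (a : ℕ) (b : ℕ) with hlt | heq | hgt
      · left
        by_contra hne
        have h2 : (a : ℕ) + 2 ≤ (b : ℕ) := by omega
        have := hmono a b (by omega) (by omega)
        have hd : G.dist (g a) (g b) ≤ 1 := by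
          have := SimpleGraph.dist_le (SimpleGraph.Walk.cons hadj SimpleGraph.Walk.nil)
          simpa using this
        omega
      · exfalso
        have : g (a : ℕ) = g (b : ℕ) := by rw [heq]
        rw [this] at hadj
        exact G.irrefl hadj
      · right
        by_contra hne
        have h2 : (b : ℕ) + 2 ≤ (a : ℕ) := by omega
        have := hmono b a (by omega) (by omega)
        have hd : G.dist (g b) (g a) ≤ 1 := by
          have := SimpleGraph.dist_le (SimpleGraph.Walk.cons hadj.symm SimpleGraph.Walk.nil)
          simpa using this
        omega
    · intro hab
      rcases hab with hab | hab
      · have := hgadj a (by omega)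
        have heq : (a : ℕ) + 1 = (b : ℕ) := hab
        rwa [heq] at this
      · have := hgadj b (by omega)
        have heq : (b : ℕ) + 1 = (a : ℕ) := hab
        rw [heq] at this
        exact this.symm
end DiamSec
section LemDSec
variable {V : Type} [Fintype V] {G : SimpleGraph V}

/-- `u` is at distance exactly 2 from `x` (in the weak sense of having a common neighbor). -/
def DistTwo (G : SimpleGraph V) (x u : V) : Prop :=
  u ≠ x ∧ ¬ G.Adj x u ∧ ∃ p, G.Adj x p ∧ G.Adj p u

lemma lemD {n : ℕ} (hn : 1 ≤ n) (hKn : ¬ HasInducedCopy G (completeGraph (Fin n)))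
    (hSS : ¬ HasInducedCopy G (SStar n)) (x : V) :
    ∃ Y : Finset V, Y.card ≤ RamB (n-1) (RamB n n) ∧ (∀ y ∈ Y, G.Adj x y) ∧
      ∀ u, DistTwo G x u → ∃ y ∈ Y, G.Adj y u := by
  classical
  set SS : Set (Finset V) :=
    {Y | (∀ y ∈ Y, G.Adj x y) ∧ ∀ u, DistTwo G x u → ∃ y ∈ Y, G.Adj y u} with hSSdef
  have hSSne : SS.Nonempty := by
    refine ⟨Finset.univ.filter (fun y => G.Adj x y), ?_, ?_⟩
    · intro y hy
      exact (Finset.mem_filter.mp hy).2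
    · rintro u ⟨hune, hnadj, p, hxp, hpu⟩
      exact ⟨p, Finset.mem_filter.mpr ⟨Finset.mem_univ p, hxp⟩, hpu⟩
  have hKne : {k | ∃ Y ∈ SS, Y.card = k}.Nonempty := by
    obtain ⟨Y, hY⟩ := hSSne
    exact ⟨Y.card, Y, hY, rfl⟩
  obtain ⟨Y, hYSS, hYcard⟩ := Nat.sInf_mem hKne
  have hYadj : ∀ y ∈ Y, G.Adj x y := hYSS.1
  have hYdom : ∀ u, DistTwo G x u → ∃ y ∈ Y, G.Adj y u := hYSS.2
  -- privacy from minimality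
  have hpriv : ∀ y ∈ Y, ∃ z, DistTwo G x z ∧ G.Adj y z ∧
      ∀ y' ∈ Y, y' ≠ y → ¬ G.Adj y' z := by
    intro y hy
    have herase : (Y.erase y) ∉ SS := by
      intro hmem
      have h1 : sInf {k | ∃ Y ∈ SS, Y.card = k} ≤ (Y.erase y).card :=
        Nat.sInf_le ⟨Y.erase y, hmem, rfl⟩
      have h2 : (Y.erase y).card = Y.card - 1 := Finset.card_erase_of_mem hy
      have h3 : 0 < Y.card := Finset.card_pos.mpr ⟨y, hy⟩
      omega
    have hadjcond : ∀ y' ∈ Y.erase y, G.Adj x y' := fun y' hy' =>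
      hYadj y' (Finset.mem_of_mem_erase hy')
    have : ¬ (∀ u, DistTwo G x u → ∃ y' ∈ Y.erase y, G.Adj y' u) := by
      intro hdom
      exact herase ⟨hadjcond, hdom⟩
    push_neg at this
    obtain ⟨z, hz1, hz2⟩ := this
    refine ⟨z, hz1, ?_, ?_⟩
    · obtain ⟨y'', hy''Y, hy''adj⟩ := hYdom z hz1
      by_cases hcase : y'' = y
      · exact hcase ▸ hy''adj
      · exact absurd hy''adj (hz2 y'' (Finset.mem_erase.mpr ⟨hcase, hy''Y⟩))
    · intro y' hy' hne
      exact hz2 y' (Finset.mem_erase.mpr ⟨hne, hy'⟩)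
  refine ⟨Y, ?_, hYadj, hYdom⟩
  by_contra hbig
  push_neg at hbig
  -- First Ramsey: inside Y
  rcases ramB_spec G (n-1) (RamB n n) Y (le_of_lt hbig) with
    ⟨t, htY, htcard, htcl⟩ | ⟨t, htY, htcard, htind⟩
  · -- clique of size n-1 in N(x): together with x, a K_n
    apply hKn
    have hxt : x ∉ t := fun hxt => G.irrefl (hYadj x (htY hxt))
    refine hasCompleteCopy_of_clique (insert x t) ?_ ?_
    · rw [Finset.card_insert_of_notMem hxt, htcard]; omega
    · intro a ha b hb hab
      rcases Finset.mem_insert.mp ha with ha' | ha' <;>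
        rcases Finset.mem_insert.mp hb with hb' | hb'
      · exact absurd (ha'.trans hb'.symm) hab
      · subst ha'; exact hYadj b (htY hb')
      · subst hb'; exact (hYadj a (htY ha')).symm
      · exact htcl a ha' b hb' hab
  · -- independent set t of size RamB n n in Y; private neighbors
    set zf : V → V := fun y => if h : y ∈ Y then Classical.choose (hpriv y h) else x
      with hzf
    have hzfspec : ∀ y (h : y ∈ Y), DistTwo G x (zf y) ∧ G.Adj y (zf y) ∧
        ∀ y' ∈ Y, y' ≠ y → ¬ G.Adj y' (zf y) := by
      intro y h
      simp only [hzf, dif_pos h]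
      exact Classical.choose_spec (hpriv y h)
    -- second Ramsey: on the private neighbors
    set G' : SimpleGraph V :=
      { Adj := fun a b => a ≠ b ∧ G.Adj (zf a) (zf b)
        symm := by
          constructor
          rintro a b ⟨h1, h2⟩
          exact ⟨h1.symm, h2.symm⟩
        loopless := by constructor; rintro a ⟨h1, _⟩; exact h1 rfl } with hG'
    rcases ramB_spec G' n n t (le_of_eq htcard.symm) with
      ⟨s, hst, hscard, hscl⟩ | ⟨s, hst, hscard, hsind⟩
    · -- clique of size n among the zf-images
      apply hKn
      have hzinj : Set.InjOn zf s := by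
        intro a ha b hb hab
        by_contra hne
        exact G.irrefl (hab ▸ (hscl a ha b hb hne).2)
      refine hasCompleteCopy_of_clique (s.image zf) ?_ ?_
      · rw [Finset.card_image_of_injOn hzinj, hscard]
      · intro a ha b hb hab
        obtain ⟨a', ha', rfl⟩ := Finset.mem_image.mp ha
        obtain ⟨b', hb', rfl⟩ := Finset.mem_image.mp hb
        have hne : a' ≠ b' := fun h => hab (by rw [h])
        exact (hscl a' ha' b' hb' hne).2
    · -- independent: build the induced SStar
      apply hSS
      have hsY : ∀ a ∈ s, a ∈ Y := fun a ha => htY (hst ha)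
      let e := Finset.equivFinOfCardEq hscard
      set yy : Fin n → V := fun i => (e.symm i : V) with hyy'
      set zz : Fin n → V := fun i => zf (yy i) with hzz'
      have hyymem : ∀ i, yy i ∈ s := fun i => (e.symm i).2
      have hyyne : ∀ i j, i ≠ j → yy i ≠ yy j := by
        intro i j hij h
        exact hij (e.symm.injective (Subtype.ext h) ▸ rfl)
      have hspec : ∀ i, DistTwo G x (zz i) ∧ G.Adj (yy i) (zz i) ∧
          ∀ y' ∈ Y, y' ≠ yy i → ¬ G.Adj y' (zz i) :=
        fun i => hzfspec (yy i) (hsY _ (hyymem i))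
      refine hasSStarCopy x yy zz ?_ ?_ ?_ ?_ ?_ hyyne ?_ ?_ ?_
      · exact fun i => hYadj _ (hsY _ (hyymem i))
      · exact fun i => (hspec i).2.1
      · exact fun i => (hspec i).1.2.1
      · exact fun i => fun h => (hspec i).1.1 h.symm
      · -- y's pairwise nonadjacent (t independent in G)
        intro i j hij
        exact htind _ (hst (hyymem i)) _ (hst (hyymem j)) (hyyne i j hij)
      · -- z's pairwise nonadjacent (s independent in G')
        intro i j hij
        have := hsind _ (hyymem i) _ (hyymem j) (hyyne i j hij)
        simp only [hG'] at this
        push_neg at this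
        intro hadj
        exact (this (hyyne i j hij)).elim hadj
      · -- z's distinct
        intro i j hij h
        have hpr := (hspec i).2.2 (yy j) (hsY _ (hyymem j)) (hyyne j i (fun e' => hij e'.symm))
        exact hpr (h ▸ (hspec j).2.1)
      · -- y i not adjacent to z j
        intro i j hij
        exact (hspec j).2.2 (yy i) (hsY _ (hyymem i)) (hyyne i j hij)
end LemDSec
section DomSec
variable {V : Type} [Fintype V] {G : SimpleGraph V}

lemma dom_exists {n : ℕ} (hn : 4 ≤ n) (hconn : G.Connected)
    (hKn : ¬ HasInducedCopy G (completeGraph (Fin n)))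
    (hSS : ¬ HasInducedCopy G (SStar n))
    (hP : ¬ HasInducedCopy G (pathGraph n)) :
    ∃ D : Finset V, D.card ≤ (RamB (n-1) (RamB n n) + 1) ^ n ∧
      ∀ u : V, ∃ w ∈ D, w = u ∨ G.Adj w u := by
  classical
  set h := RamB (n-1) (RamB n n) with hh
  choose Yf hYc hYadj hYdom using fun x : V => lemD (by omega : 1 ≤ n) hKn hSS x
  obtain ⟨v0⟩ := hconn.nonempty
  set DD : ℕ → Finset V := fun j => Nat.rec {v0} (fun _ D => D ∪ D.biUnion Yf) j
    with hDD
  have hDDs : ∀ j, DD (j+1) = DD j ∪ (DD j).biUnion Yf := fun j => rfl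
  have hmono : ∀ j, DD j ⊆ DD (j+1) := by
    intro j
    rw [hDDs j]
    exact Finset.subset_union_left
  have hmono' : ∀ j k, j ≤ k → DD j ⊆ DD k := by
    intro j k hjk
    induction k with
    | zero => have : j = 0 := by omega
              subst this; exact fun a ha => ha
    | succ k ihk =>
      rcases Nat.lt_or_ge j (k+1) with hlt | hge
      · exact fun a ha => hmono k (ihk (by omega) ha)
      · have : j = k + 1 := by omega
        subst this; exact fun a ha => ha
  have hcard : ∀ j, (DD j).card ≤ (h+1)^j := by
    intro j
    induction j with
    | zero => simp [hDD]
    | succ j ihj =>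
      rw [hDDs j]
      calc (DD j ∪ (DD j).biUnion Yf).card
          ≤ (DD j).card + ((DD j).biUnion Yf).card := Finset.card_union_le _ _
        _ ≤ (DD j).card + (DD j).card * h :=
            Nat.add_le_add_left (Finset.card_biUnion_le_card_mul _ _ _
              (fun a _ => hYc a)) _
        _ ≤ (h+1)^j + (h+1)^j * h := by
            have := Nat.mul_le_mul_right h ihj
            omega
        _ = (h+1)^(j+1) := by ring
  have hstep : ∀ ℓ : ℕ, ∀ u : V, G.dist v0 u = ℓ → 1 ≤ ℓ →
      ∃ w ∈ DD (ℓ-1), w = u ∨ G.Adj w u := by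
    intro ℓ
    induction ℓ using Nat.strong_induction_on with
    | _ ℓ ih =>
      intro u hdist hℓ
      obtain ⟨g, hg0, hgL, hgadj, hgd⟩ := geo_seq hconn ℓ v0 u hdist
      set p := g (ℓ-1) with hp
      have hpadj : G.Adj p u := by
        have := hgadj (ℓ-1) (by omega)
        have heq : ℓ - 1 + 1 = ℓ := by omega
        rw [heq, hgL] at this
        exact this
      have hpdist : G.dist v0 p = ℓ - 1 := (hgd (ℓ-1) (by omega)).1
      rcases Nat.lt_or_ge ℓ 2 with hℓ1 | hℓ2
      · -- ℓ = 1 : p = v0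
        have hℓeq : ℓ = 1 := by omega
        have hp0 : G.dist v0 p = 0 := by rw [hpdist, hℓeq]
        have hpv : p = v0 := ((hconn.dist_eq_zero_iff).mp hp0).symm
        refine ⟨v0, ?_, Or.inr (hpv ▸ hpadj)⟩
        have : v0 ∈ DD 0 := by simp [hDD]
        exact hmono' 0 (ℓ-1) (by omega) this
      · -- ℓ ≥ 2
        obtain ⟨w, hwD, hwpu⟩ := ih (ℓ-1) (by omega) p hpdist (by omega)
        rcases hwpu with hwp | hwp
        · subst hwp
          exact ⟨p, hmono' (ℓ-1-1) (ℓ-1) (by omega) hwD, Or.inr hpadj⟩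
        · by_cases hue : u = w
          · exact ⟨w, hmono' (ℓ-1-1) (ℓ-1) (by omega) hwD, Or.inl hue.symm⟩
          by_cases huadj : G.Adj w u
          · exact ⟨w, hmono' (ℓ-1-1) (ℓ-1) (by omega) hwD, Or.inr huadj⟩
          have hD2 : DistTwo G w u := ⟨hue, huadj, p, hwp, hpadj⟩
          obtain ⟨y, hyY, hyu⟩ := hYdom w u hD2
          refine ⟨y, ?_, Or.inr hyu⟩
          have : y ∈ (DD (ℓ-1-1)).biUnion Yf :=
            Finset.mem_biUnion.mpr ⟨w, hwD, hyY⟩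
          have h2 : y ∈ DD (ℓ-1-1+1) := by
            rw [hDDs]
            exact Finset.mem_union_right _ this
          have heq : ℓ - 1 - 1 + 1 = ℓ - 1 := by omega
          rwa [heq] at h2
  refine ⟨DD (n-2), le_trans (hcard (n-2)) (Nat.pow_le_pow_right (by omega) (by omega)), ?_⟩
  intro u
  have hdiam : G.dist v0 u ≤ n - 2 := dist_small_of_no_path (by omega) hconn hP v0 u
  rcases Nat.eq_zero_or_pos (G.dist v0 u) with h0 | hpos
  · have : v0 = u := (hconn.dist_eq_zero_iff).mp h0
    refine ⟨v0, ?_, Or.inl this⟩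
    have : v0 ∈ DD 0 := by simp [hDD]
    exact hmono' 0 (n-2) (by omega) this
  · obtain ⟨w, hwD, hw⟩ := hstep (G.dist v0 u) u rfl (by omega)
    exact ⟨w, hmono' _ (n-2) (by omega) hwD, hw⟩
end DomSec
section PBSec
variable {V : Type} [Fintype V]

/-- The predicate for parts: induced star or singleton. -/
def SPred (G : SimpleGraph V) (S : Set V) : Prop :=
  IsInducedStarSet G S ∨ IsSingletonSet S

/-- `U` can be partitioned into at most `k` induced stars / singletons. -/
def PB (G : SimpleGraph V) (U : Set V) (k : ℕ) : Prop :=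
  ∃ P : Finset (Set V), P.card ≤ k ∧ (∀ S ∈ P, SPred G S) ∧ (∀ S ∈ P, S ⊆ U) ∧
    (∀ v ∈ U, ∃ S ∈ P, v ∈ S) ∧ (∀ S ∈ P, ∀ T ∈ P, S ≠ T → Disjoint S T)

lemma PB.mono {G : SimpleGraph V} {U : Set V} {k k' : ℕ} (h : PB G U k) (hk : k ≤ k') :
    PB G U k' := by
  obtain ⟨P, h1, h2, h3, h4, h5⟩ := h
  exact ⟨P, le_trans h1 hk, h2, h3, h4, h5⟩

lemma PB.empty {G : SimpleGraph V} : PB G (∅ : Set V) 0 :=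
  ⟨∅, by simp, by simp, by simp, by simp, by simp⟩

lemma PB.union {G : SimpleGraph V} {U₁ U₂ : Set V} {k₁ k₂ : ℕ}
    (h1 : PB G U₁ k₁) (h2 : PB G U₂ k₂) (hd : Disjoint U₁ U₂) :
    PB G (U₁ ∪ U₂) (k₁ + k₂) := by
  classical
  obtain ⟨P₁, hc1, hp1, hs1, hcov1, hd1⟩ := h1
  obtain ⟨P₂, hc2, hp2, hs2, hcov2, hd2⟩ := h2
  refine ⟨P₁ ∪ P₂, ?_, ?_, ?_, ?_, ?_⟩
  · calc (P₁ ∪ P₂).card ≤ P₁.card + P₂.card := Finset.card_union_le _ _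
      _ ≤ k₁ + k₂ := Nat.add_le_add hc1 hc2
  · intro S hS
    rcases Finset.mem_union.mp hS with hS | hS
    · exact hp1 S hS
    · exact hp2 S hS
  · intro S hS
    rcases Finset.mem_union.mp hS with hS | hS
    · exact (hs1 S hS).trans Set.subset_union_left
    · exact (hs2 S hS).trans Set.subset_union_right
  · intro v hv
    rcases hv with hv | hv
    · obtain ⟨S, hS, hvS⟩ := hcov1 v hv
      exact ⟨S, Finset.mem_union_left _ hS, hvS⟩
    · obtain ⟨S, hS, hvS⟩ := hcov2 v hv
      exact ⟨S, Finset.mem_union_right _ hS, hvS⟩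
  · intro S hS T hT hne
    rcases Finset.mem_union.mp hS with hS | hS <;> rcases Finset.mem_union.mp hT with hT | hT
    · exact hd1 S hS T hT hne
    · exact Set.disjoint_of_subset (hs1 S hS) (hs2 T hT) hd
    · exact (Set.disjoint_of_subset (hs1 T hT) (hs2 S hS) hd).symm
    · exact hd2 S hS T hT hne

lemma isStarSet {G : SimpleGraph V} (c : V) (I : Set V) (hne : I.Nonempty) (hcI : c ∉ I)
    (hadj : ∀ x ∈ I, G.Adj c x) (hind : ∀ x ∈ I, ∀ y ∈ I, x ≠ y → ¬ G.Adj x y) :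
    IsInducedStarSet G (insert c I) := by
  classical
  haveI : Fintype I := (Set.toFinite I).fintype
  set m := Fintype.card I with hm
  have hm1 : 1 ≤ m := Fintype.card_pos_iff.mpr (Set.nonempty_coe_sort.mpr hne)
  let eI : I ≃ Fin m := Fintype.equivFin I
  refine ⟨m, hm1, ⟨?_⟩⟩
  let S : Set V := insert c I
  let φ : S → Unit ⊕ Fin m := fun u =>
    if h : (u : V) ∈ I then Sum.inr (eI ⟨u, h⟩) else Sum.inl ()
  let ψ : Unit ⊕ Fin m → S :=
    Sum.elim (fun _ => ⟨c, Set.mem_insert c I⟩)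
      (fun k => ⟨(eI.symm k : V), Set.mem_insert_of_mem c (eI.symm k).2⟩)
  have hval : ∀ u : S, (u : V) ∉ I → (u : V) = c := by
    rintro ⟨u, hu⟩ hnu
    rcases hu with h | h
    · exact h
    · exact absurd h hnu
  have hli : Function.LeftInverse ψ φ := by
    rintro ⟨u, hu⟩
    by_cases h : u ∈ I
    · simp only [φ, dif_pos h, ψ, Sum.elim_inr]
      exact Subtype.ext (by simp)
    · simp only [φ, dif_neg h, ψ, Sum.elim_inl]
      exact Subtype.ext (hval ⟨u, hu⟩ h).symm
  have hri : Function.RightInverse ψ φ := by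
    rintro (⟨⟩|k)
    · simp only [ψ, Sum.elim_inl, φ, dif_neg hcI]
    · simp only [ψ, Sum.elim_inr, φ, dif_pos (eI.symm k).2]
      congr
      · exact congrArg eI (Subtype.ext rfl) |>.trans (eI.apply_symm_apply k)
  refine ⟨⟨φ, ψ, hli, hri⟩, ?_⟩
  rintro ⟨a, ha⟩ ⟨b, hb⟩
  show (_root_.starGraph m).Adj _ _ ↔ G.Adj a b
  by_cases hA : a ∈ I <;> by_cases hB : b ∈ I
  · simp only [Equiv.coe_fn_mk, φ, dif_pos hA, dif_pos hB, _root_.starGraph,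
      completeBipartiteGraph_adj]
    have hnadj : ¬ G.Adj a b := by
      by_cases hab : a = b
      · subst hab; exact G.irrefl
      · exact hind a hA b hB hab
    simp [hnadj]
  · have hbc : b = c := hval ⟨b, hb⟩ hB
    subst hbc
    simp only [Equiv.coe_fn_mk, φ, dif_pos hA, dif_neg hB, _root_.starGraph,
      completeBipartiteGraph_adj]
    simp [(hadj a hA).symm]
  · have hac : a = c := hval ⟨a, ha⟩ hA
    subst hac
    simp only [Equiv.coe_fn_mk, φ, dif_neg hA, dif_pos hB, _root_.starGraph,
      completeBipartiteGraph_adj]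
    simp [hadj b hB]
  · have hac : a = c := hval ⟨a, ha⟩ hA
    have hbc : b = c := hval ⟨b, hb⟩ hB
    subst hac; subst hbc
    simp only [Equiv.coe_fn_mk, φ, dif_neg hA, _root_.starGraph, completeBipartiteGraph_adj]
    simp [G.irrefl]

lemma PB_star {G : SimpleGraph V} (c : V) (I : Set V) (hcI : c ∉ I)
    (hadj : ∀ x ∈ I, G.Adj c x) (hind : ∀ x ∈ I, ∀ y ∈ I, x ≠ y → ¬ G.Adj x y) :
    PB G (insert c I) 1 := by
  classical
  rcases Set.eq_empty_or_nonempty I with rfl | hne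
  · refine ⟨{{c}}, by simp, ?_, by simp, by simp, by simp⟩
    intro S hS
    rw [Finset.mem_singleton] at hS
    subst hS
    exact Or.inr ⟨c, rfl⟩
  · refine ⟨{insert c I}, by simp, ?_, by simp, ?_, by simp⟩
    · intro S hS
      rw [Finset.mem_singleton] at hS
      subst hS
      exact Or.inl (isStarSet c I hne hcI hadj hind)
    · intro v hv
      exact ⟨insert c I, Finset.mem_singleton_self _, hv⟩
end PBSec
section ExtractSec
variable {V : Type} [Fintype V]

/-- `a` is untouched by the matching `pairs`:  distinct from and non-adjacent to
all endpoints. -/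
def Untouched (G : SimpleGraph V) (pairs : Finset (V × V)) (a : V) : Prop :=
  ∀ p ∈ pairs, a ≠ p.1 ∧ a ≠ p.2 ∧ ¬ G.Adj p.1 a ∧ ¬ G.Adj p.2 a

lemma extract {G : SimpleGraph V} : ∀ U : Finset V,
    ∃ pairs : Finset (V × V),
      (∀ p ∈ pairs, p.1 ∈ U ∧ p.2 ∈ U ∧ G.Adj p.1 p.2) ∧
      (∀ p ∈ pairs, ∀ q ∈ pairs, p ≠ q →
        ¬ G.Adj p.1 q.1 ∧ ¬ G.Adj p.1 q.2 ∧ ¬ G.Adj p.2 q.1 ∧ ¬ G.Adj p.2 q.2 ∧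
        p.1 ≠ q.1 ∧ p.1 ≠ q.2 ∧ p.2 ≠ q.1 ∧ p.2 ≠ q.2) ∧
      (∀ a ∈ U, ∀ b ∈ U, Untouched G pairs a → Untouched G pairs b → a ≠ b →
        ¬ G.Adj a b) := by
  classical
  intro U
  induction U using Finset.strongInductionOn with
  | _ U ih =>
    by_cases hindep : ∀ a ∈ U, ∀ b ∈ U, a ≠ b → ¬ G.Adj a b
    · exact ⟨∅, by simp, by simp, fun a ha b hb _ _ hab => hindep a ha b hb hab⟩
    · push_neg at hindep
      obtain ⟨a, ha, b, hb, hab, hadj⟩ := hindep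
      set U' := U.filter (fun u => u ≠ a ∧ u ≠ b ∧ ¬ G.Adj a u ∧ ¬ G.Adj b u) with hU'
      have haU' : a ∉ U' := by
        intro h
        exact ((Finset.mem_filter.mp h).2.1) rfl
      have hss : U' ⊂ U := Finset.ssubset_iff_of_subset (Finset.filter_subset _ _)
        |>.mpr ⟨a, ha, haU'⟩
      obtain ⟨pairs', h1, h2, h3⟩ := ih U' hss
      have hmem' : ∀ p ∈ pairs', (p : V × V).1 ∈ U' ∧ p.2 ∈ U' := fun p hp =>
        ⟨(h1 p hp).1, (h1 p hp).2.1⟩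
      have hU'spec : ∀ u ∈ U', u ≠ a ∧ u ≠ b ∧ ¬ G.Adj a u ∧ ¬ G.Adj b u := by
        intro u hu
        exact (Finset.mem_filter.mp hu).2
      refine ⟨insert (a, b) pairs', ?_, ?_, ?_⟩
      · intro p hp
        rcases Finset.mem_insert.mp hp with rfl | hp
        · exact ⟨ha, hb, hadj⟩
        · obtain ⟨hp1, hp2⟩ := hmem' p hp
          exact ⟨Finset.mem_of_mem_filter _ hp1, Finset.mem_of_mem_filter _ hp2,
            (h1 p hp).2.2⟩
      · intro p hp q hq hpq
        rcases Finset.mem_insert.mp hp with rfl | hp <;>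
          rcases Finset.mem_insert.mp hq with hq' | hq'
        · exact absurd hq'.symm hpq
        · obtain ⟨hq1, hq2⟩ := hmem' q hq'
          obtain ⟨hqa1, hqb1, hqadja1, hqadjb1⟩ := hU'spec _ hq1
          obtain ⟨hqa2, hqb2, hqadja2, hqadjb2⟩ := hU'spec _ hq2
          exact ⟨hqadja1, hqadja2, hqadjb1, hqadjb2,
            fun h => hqa1 h.symm, fun h => hqa2 h.symm,
            fun h => hqb1 h.symm, fun h => hqb2 h.symm⟩
        · subst hq'
          obtain ⟨hp1, hp2⟩ := hmem' p hp
          obtain ⟨hpa1, hpb1, hpadja1, hpadjb1⟩ := hU'spec _ hp1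
          obtain ⟨hpa2, hpb2, hpadja2, hpadjb2⟩ := hU'spec _ hp2
          exact ⟨fun h => hpadja1 h.symm, fun h => hpadjb1 h.symm,
            fun h => hpadja2 h.symm, fun h => hpadjb2 h.symm,
            hpa1, hpb1, hpa2, hpb2⟩
        · exact h2 p hp q hq' hpq
      · intro x hx y hy hux huy hxy
        have hxab := hux (a, b) (Finset.mem_insert_self _ _)
        have hyab := huy (a, b) (Finset.mem_insert_self _ _)
        have hxU' : x ∈ U' := Finset.mem_filter.mpr
          ⟨hx, hxab.1, hxab.2.1, hxab.2.2.1, hxab.2.2.2⟩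
        have hyU' : y ∈ U' := Finset.mem_filter.mpr
          ⟨hy, hyab.1, hyab.2.1, hyab.2.2.1, hyab.2.2.2⟩
        refine h3 x hxU' y hyU' ?_ ?_ hxy
        · exact fun p hp => hux p (Finset.mem_insert_of_mem hp)
        · exact fun p hp => huy p (Finset.mem_insert_of_mem hp)
end ExtractSec

section FoldSec
variable {V : Type} [Fintype V]

lemma fold {G : SimpleGraph V} (b : ℕ) :
    ∀ L : List V, L.Nodup → ∀ R : Finset V, (∀ w ∈ L, w ∉ R) →
      (∀ u ∈ R, ∃ w ∈ L, G.Adj w u) →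
      (∀ w ∈ L, ∀ S : Finset V, S ⊆ R → (∀ u ∈ S, G.Adj w u) →
        PB G (insert w (↑S : Set V)) b) →
      PB G ({x | x ∈ L} ∪ (↑R : Set V)) (L.length * b) := by
  classical
  intro L
  induction L with
  | nil =>
    intro _ R _ hdom _
    have hR : R = ∅ := by
      by_contra hne
      obtain ⟨u, hu⟩ := Finset.nonempty_iff_ne_empty.mpr hne
      obtain ⟨w, hw, _⟩ := hdom u hu
      exact List.not_mem_nil hw
    subst hR
    have : ({x | x ∈ ([] : List V)} ∪ (↑(∅ : Finset V) : Set V)) = (∅ : Set V) := by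
      ext x; simp
    rw [this]
    simp only [List.length_nil, Nat.zero_mul]
    exact PB.empty
  | cons w L' ihL =>
    intro hnd R hwR hdom hcall
    set Sw := R.filter (fun u => G.Adj w u) with hSw
    set R' := R.filter (fun u => ¬ G.Adj w u) with hR'
    have hSwR : Sw ⊆ R := Finset.filter_subset _ _
    have hR'R : R' ⊆ R := Finset.filter_subset _ _
    have h1 : PB G (insert w (↑Sw : Set V)) b :=
      hcall w List.mem_cons_self Sw hSwR
        (fun u hu => (Finset.mem_filter.mp hu).2)
    have h2 : PB G ({x | x ∈ L'} ∪ (↑R' : Set V)) (L'.length * b) := by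
      refine ihL (List.nodup_cons.mp hnd).2 R' ?_ ?_ ?_
      · exact fun w' hw' => fun hmem => hwR w' (List.mem_cons_of_mem w hw') (hR'R hmem)
      · intro u hu
        obtain ⟨w'', hw'', hadj''⟩ := hdom u (hR'R hu)
        rcases List.mem_cons.mp hw'' with rfl | hw''
        · exact absurd hadj'' (Finset.mem_filter.mp hu).2
        · exact ⟨w'', hw'', hadj''⟩
      · intro w' hw' S hS hSadj
        exact hcall w' (List.mem_cons_of_mem w hw') S (hS.trans hR'R) hSadj
    have hdisj : Disjoint (insert w (↑Sw : Set V)) ({x | x ∈ L'} ∪ (↑R' : Set V)) := by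
      rw [Set.disjoint_left]
      rintro x hx hx'
      rcases Set.mem_insert_iff.mp hx with h | hx
      · subst h
        rcases hx' with hx' | hx'
        · exact (List.nodup_cons.mp hnd).1 hx'
        · exact hwR x List.mem_cons_self (hR'R hx')
      · rcases hx' with hx' | hx'
        · exact hwR x (List.mem_cons_of_mem w hx') (hSwR hx)
        · exact (Finset.mem_filter.mp hx').2 ((Finset.mem_filter.mp hx).2)
    have hunion := PB.union h1 h2 hdisj
    have hseteq : (insert w (↑Sw : Set V)) ∪ ({x | x ∈ L'} ∪ (↑R' : Set V)) =
        {x | x ∈ (w :: L')} ∪ (↑R : Set V) := by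
      ext x
      simp only [Set.mem_union, Set.mem_insert_iff, Set.mem_setOf_eq, List.mem_cons,
        Finset.coe_filter, Set.mem_setOf_eq, hSw, hR', Finset.mem_coe,
        Finset.mem_filter]
      constructor
      · rintro ((rfl | ⟨hxR, _⟩) | (hL' | ⟨hxR, _⟩))
        · exact Or.inl (Or.inl rfl)
        · exact Or.inr hxR
        · exact Or.inl (Or.inr hL')
        · exact Or.inr hxR
      · rintro ((rfl | hL') | hxR)
        · exact Or.inl (Or.inl rfl)
        · exact Or.inr (Or.inl hL')
        · by_cases hadjx : G.Adj w x
          · exact Or.inl (Or.inr ⟨hxR, hadjx⟩)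
          · exact Or.inr (Or.inr ⟨hxR, hadjx⟩)
    rw [hseteq] at hunion
    have hlen : b + L'.length * b = (w :: L').length * b := by
      simp [List.length_cons]
      ring
    rw [hlen] at hunion
    exact hunion
end FoldSec
/-- Bound for the recursive star partition. -/
def Fb (n : ℕ) : ℕ → ℕ
  | 0 => 1
  | d+1 => 1 + (2*n) * Fb n d

section CoreSec
variable {V : Type} [Fintype V] {G : SimpleGraph V}

lemma core {n : ℕ} (hn : 4 ≤ n)
    (hKn : ¬ HasInducedCopy G (completeGraph (Fin n)))
    (hST : ¬ HasInducedCopy G (STilde n)) :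
    ∀ (d : ℕ) (C : Finset V), (∀ x ∈ C, ∀ y ∈ C, x ≠ y → G.Adj x y) →
      C.card + d = n - 1 →
      ∀ c ∈ C, ∀ U : Finset V, (∀ u ∈ U, u ∉ C) →
      (∀ u ∈ U, ∀ x ∈ C, G.Adj x u) → PB G (insert c (↑U : Set V)) (Fb n d) := by
  classical
  intro d
  induction d with
  | zero =>
    intro C hcl hcard c hc U hUC hadj
    have hUempty : U = ∅ := by
      by_contra hne
      obtain ⟨u, hu⟩ := Finset.nonempty_iff_ne_empty.mpr hne
      apply hKn
      refine hasCompleteCopy_of_clique (insert u C) ?_ ?_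
      · rw [Finset.card_insert_of_notMem (hUC u hu)]; omega
      · intro x hx y hy hxy
        rcases Finset.mem_insert.mp hx with hx' | hx' <;>
          rcases Finset.mem_insert.mp hy with hy' | hy'
        · exact absurd (hx'.trans hy'.symm) hxy
        · subst hx'; exact (hadj x hu y hy').symm
        · subst hy'; exact hadj y hu x hx'
        · exact hcl x hx' y hy' hxy
    subst hUempty
    have hI : PB G (insert c (∅ : Set V)) 1 :=
      PB_star c ∅ (fun h => h) (by simp) (by simp)
    simpa [Fb] using hI
  | succ d ihd =>
    intro C hcl hcard c hc U hUC hadj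
    have hcU : c ∉ U := fun h => hUC c h hc
    have hadjc : ∀ u ∈ U, G.Adj c u := fun u hu => hadj u hu c hc
    obtain ⟨pairs, hp1, hp2, hp3⟩ := extract (G := G) U
    have hpc : pairs.card ≤ n - 1 := by
      by_contra hbig
      push_neg at hbig
      obtain ⟨t, htp, htc⟩ := Finset.exists_subset_card_eq
        (show n ≤ pairs.card by omega)
      apply hST
      let e := Finset.equivFinOfCardEq htc
      set yy : Fin n → V := fun i => ((e.symm i : V × V)).1 with hyy
      set zz : Fin n → V := fun i => ((e.symm i : V × V)).2 with hzz
      have hmem : ∀ i, ((e.symm i : V × V)) ∈ pairs := fun i => htp (e.symm i).2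
      have hpne : ∀ i j, i ≠ j → ((e.symm i : V × V)) ≠ ((e.symm j : V × V)) := by
        intro i j hij h
        exact hij (by simpa using congrArg e (Subtype.ext h))
      have cross := fun i j (hij : i ≠ j) =>
        hp2 _ (hmem i) _ (hmem j) (hpne i j hij)
      refine hasSTildeCopy c yy zz ?_ ?_ ?_ ?_ ?_ ?_ ?_ ?_
      · exact fun i => hadjc _ (hp1 _ (hmem i)).1
      · exact fun i => (hp1 _ (hmem i)).2.2
      · exact fun i => hadjc _ (hp1 _ (hmem i)).2.1
      · exact fun i j hij => (cross i j hij).1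
      · exact fun i j hij => (cross i j hij).2.2.2.2.1
      · exact fun i j hij => (cross i j hij).2.2.2.1
      · exact fun i j hij => (cross i j hij).2.2.2.2.2.2.2
      · exact fun i j hij => (cross i j hij).2.1
    set W := pairs.image Prod.fst ∪ pairs.image Prod.snd with hW
    have hWU : ∀ w ∈ W, w ∈ U := by
      intro w hw
      rcases Finset.mem_union.mp hw with hw' | hw'
      · obtain ⟨p, hp, rfl⟩ := Finset.mem_image.mp hw'
        exact (hp1 p hp).1
      · obtain ⟨p, hp, rfl⟩ := Finset.mem_image.mp hw'
        exact (hp1 p hp).2.1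
    have hWcard : W.card ≤ 2 * n := by
      calc W.card ≤ (pairs.image Prod.fst).card + (pairs.image Prod.snd).card :=
            Finset.card_union_le _ _
        _ ≤ pairs.card + pairs.card :=
            Nat.add_le_add (Finset.card_image_le) (Finset.card_image_le)
        _ ≤ 2 * n := by omega
    set I0 := U.filter (fun u => Untouched G pairs u) with hI0
    have hI0W : ∀ a ∈ I0, a ∉ W := by
      intro a ha haW
      have hu := (Finset.mem_filter.mp ha).2
      rcases Finset.mem_union.mp haW with hw' | hw'
      · obtain ⟨p, hp, hpa⟩ := Finset.mem_image.mp hw'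
        exact (hu p hp).1 hpa.symm
      · obtain ⟨p, hp, hpa⟩ := Finset.mem_image.mp hw'
        exact (hu p hp).2.1 hpa.symm
    have hPB1 : PB G (insert c (↑I0 : Set V)) 1 := by
      refine PB_star c ↑I0 (fun h => hcU (Finset.mem_of_mem_filter _ h)) ?_ ?_
      · intro x hx
        exact hadjc x (Finset.mem_of_mem_filter _ hx)
      · intro x hx y hy hxy
        have hx' := Finset.mem_filter.mp hx
        have hy' := Finset.mem_filter.mp hy
        exact hp3 x hx'.1 y hy'.1 hx'.2 hy'.2 hxy
    set R := U.filter (fun u => ¬ Untouched G pairs u ∧ u ∉ W) with hR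
    have hRdom : ∀ u ∈ R, ∃ w ∈ W.toList, G.Adj w u := by
      intro u huR
      obtain ⟨hnu, hnW⟩ := (Finset.mem_filter.mp huR).2
      rw [Untouched] at hnu
      push_neg at hnu
      obtain ⟨p, hp, hcon⟩ := hnu
      have hp1W : p.1 ∈ W := Finset.mem_union_left _ (Finset.mem_image_of_mem _ hp)
      have hp2W : p.2 ∈ W := Finset.mem_union_right _ (Finset.mem_image_of_mem _ hp)
      have hne1 : u ≠ p.1 := fun h => hnW (h ▸ hp1W)
      have hne2 : u ≠ p.2 := fun h => hnW (h ▸ hp2W)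
      by_cases hadj1 : G.Adj p.1 u
      · exact ⟨p.1, Finset.mem_toList.mpr hp1W, hadj1⟩
      · exact ⟨p.2, Finset.mem_toList.mpr hp2W, hcon hne1 hne2 hadj1⟩
    have hwR : ∀ w ∈ W.toList, w ∉ R := by
      intro w hw hwR'
      exact ((Finset.mem_filter.mp hwR').2).2 (Finset.mem_toList.mp hw)
    have hcall : ∀ w ∈ W.toList, ∀ S : Finset V, S ⊆ R → (∀ u ∈ S, G.Adj w u) →
        PB G (insert w (↑S : Set V)) (Fb n d) := by
      intro w hw S hSR hSadj
      have hwW : w ∈ W := Finset.mem_toList.mp hw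
      have hwU : w ∈ U := hWU w hwW
      have hwC : w ∉ C := hUC w hwU
      refine ihd (insert w C) ?_ ?_ w (Finset.mem_insert_self _ _) S ?_ ?_
      · intro x hx y hy hxy
        rcases Finset.mem_insert.mp hx with hx' | hx' <;>
          rcases Finset.mem_insert.mp hy with hy' | hy'
        · exact absurd (hx'.trans hy'.symm) hxy
        · subst hx'; exact (hadj x hwU y hy').symm
        · subst hy'; exact hadj y hwU x hx'
        · exact hcl x hx' y hy' hxy
      · rw [Finset.card_insert_of_notMem hwC]; omega
      · intro u hu
        have huR := hSR hu
        have huU := Finset.mem_of_mem_filter _ huR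
        intro hmem
        rcases Finset.mem_insert.mp hmem with h' | h'
        · exact ((Finset.mem_filter.mp huR).2).2 (h' ▸ hwW)
        · exact hUC u huU h'
      · intro u hu x hx
        rcases Finset.mem_insert.mp hx with hx' | hx'
        · subst hx'; exact hSadj u hu
        · exact hadj u (Finset.mem_of_mem_filter _ (hSR hu)) x hx'
    have hfold := fold (Fb n d) W.toList W.nodup_toList R hwR hRdom hcall
    have hdisj : Disjoint (insert c (↑I0 : Set V))
        ({x | x ∈ W.toList} ∪ (↑R : Set V)) := by
      rw [Set.disjoint_left]
      rintro x hx hx'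
      have hxU' : x ∈ U := by
        rcases hx' with hx' | hx'
        · exact hWU x (Finset.mem_toList.mp hx')
        · exact Finset.mem_of_mem_filter _ hx'
      rcases Set.mem_insert_iff.mp hx with h | hxI
      · exact hcU (h ▸ hxU')
      · rcases hx' with hx' | hx'
        · exact hI0W x hxI (Finset.mem_toList.mp hx')
        · exact ((Finset.mem_filter.mp hx').2).1 (Finset.mem_filter.mp hxI).2
    have hunion := PB.union hPB1 hfold hdisj
    have hseteq : (insert c (↑I0 : Set V)) ∪ ({x | x ∈ W.toList} ∪ (↑R : Set V)) =
        insert c (↑U : Set V) := by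
      ext x
      simp only [Set.mem_union, Set.mem_insert_iff, Set.mem_setOf_eq,
        Finset.mem_coe, Finset.mem_toList]
      constructor
      · rintro ((rfl | hxI) | (hxW | hxR))
        · exact Or.inl rfl
        · exact Or.inr (Finset.mem_of_mem_filter _ hxI)
        · exact Or.inr (hWU x hxW)
        · exact Or.inr (Finset.mem_of_mem_filter _ hxR)
      · rintro (rfl | hxU)
        · exact Or.inl (Or.inl rfl)
        · by_cases hunt : Untouched G pairs x
          · exact Or.inl (Or.inr (Finset.mem_filter.mpr ⟨hxU, hunt⟩))
          · by_cases hxW : x ∈ W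
            · exact Or.inr (Or.inl hxW)
            · exact Or.inr (Or.inr (Finset.mem_filter.mpr ⟨hxU, hunt, hxW⟩))
    rw [hseteq] at hunion
    refine hunion.mono ?_
    have hlen : W.toList.length = W.card := Finset.length_toList W
    have : W.toList.length * Fb n d ≤ (2*n) * Fb n d := by
      rw [hlen]
      exact Nat.mul_le_mul_right _ hWcard
    simp only [Fb]
    omega
end CoreSec
lemma insp_le_of_pb {V : Type} [Fintype V] {G : SimpleGraph V} {k : ℕ}
    (h : PB G Set.univ k) : insp G ≤ k := by
  obtain ⟨P, hc, hpred, hsub, hcov, hdisj⟩ := h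
  have hmem : P.card ∈ {k' | ∃ P' : Finset (Set V), P'.card = k' ∧
      IsPartitionBy P' (fun S => IsInducedStarSet G S ∨ IsSingletonSet S)} := by
    refine ⟨P, rfl, ⟨⟨hpred, fun v => hcov v (Set.mem_univ v)⟩, ?_⟩⟩
    intro S hS T hT hne v hvS
    exact (Set.disjoint_left.mp (hdisj S hS T hT hne)) hvS
  exact le_trans (Nat.sInf_le hmem) hc

theorem statement_8 (n : ℕ) (hn : 4 ≤ n) :
    ∃ c : ℕ, ∀ (V : Type) [Fintype V] (G : SimpleGraph V),
      G.Connected →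
      ¬ HasInducedCopy G (completeGraph (Fin n)) →
      ¬ HasInducedCopy G (SStar n) →
      ¬ HasInducedCopy G (STilde n) →
      ¬ HasInducedCopy G (pathGraph n) →
      insp G ≤ c := by
  classical
  refine ⟨((RamB (n-1) (RamB n n) + 1) ^ n) * Fb n (n-2), ?_⟩
  intro V _ G hconn hKn hSS hST hP
  obtain ⟨D, hDcard, hDdom⟩ := dom_exists hn hconn hKn hSS hP
  set R : Finset V := Finset.univ.filter (fun u => u ∉ D) with hRdef
  have hcall : ∀ w ∈ D.toList, ∀ S : Finset V, S ⊆ R → (∀ u ∈ S, G.Adj w u) →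
      PB G (insert w (↑S : Set V)) (Fb n (n-2)) := by
    intro w hw S hSR hSadj
    have hwD : w ∈ D := Finset.mem_toList.mp hw
    refine core hn hKn hST (n-2) {w} ?_ ?_ w (Finset.mem_singleton_self w) S ?_ ?_
    · intro x hx y hy hxy
      rw [Finset.mem_singleton] at hx hy
      exact absurd (hx.trans hy.symm) hxy
    · rw [Finset.card_singleton]; omega
    · intro u hu hmem
      rw [Finset.mem_singleton] at hmem
      have := (Finset.mem_filter.mp (hSR hu)).2
      exact this (hmem ▸ hwD)
    · intro u hu x hx
      rw [Finset.mem_singleton] at hx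
      subst hx
      exact hSadj u hu
  have hwR : ∀ w ∈ D.toList, w ∉ R := by
    intro w hw hwR'
    exact (Finset.mem_filter.mp hwR').2 (Finset.mem_toList.mp hw)
  have hdom' : ∀ u ∈ R, ∃ w ∈ D.toList, G.Adj w u := by
    intro u hu
    have huD : u ∉ D := (Finset.mem_filter.mp hu).2
    obtain ⟨w, hwD, hw⟩ := hDdom u
    rcases hw with rfl | hadj
    · exact absurd hwD huD
    · exact ⟨w, Finset.mem_toList.mpr hwD, hadj⟩
  have hfold := fold (Fb n (n-2)) D.toList D.nodup_toList R hwR hdom' hcall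
  have hseteq : ({x | x ∈ D.toList} ∪ (↑R : Set V)) = Set.univ := by
    ext x
    simp only [Set.mem_union, Set.mem_setOf_eq, Finset.mem_toList, Finset.mem_coe,
      hRdef, Finset.mem_filter, Finset.mem_univ, true_and, Set.mem_univ, iff_true]
    by_cases hx : x ∈ D
    · exact Or.inl hx
    · exact Or.inr hx
  rw [hseteq] at hfold
  refine le_trans (insp_le_of_pb hfold) ?_
  rw [Finset.length_toList]
  exact Nat.mul_le_mul_right _ hDcard
end

section
/- For every integer n ≥ 4 there exists a constant c(n), depending only on n, such that every connected {K_n, K_{1,n}, F^(1)_n, F^(2)_n, F^(4)_n, F^(5)_n}-free finite simple graph G satisfies inpp(G) ≤ c(n). -/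
open SimpleGraph

namespace Aux
open SimpleGraph
variable {n : ℕ}

lemma F1_xx (s t : Fin 2) : (F1 n).Adj (.inl s) (.inl t) ↔
    ((s:ℕ) = 0 ∧ (t:ℕ) = 1) ∨ ((s:ℕ) = 1 ∧ (t:ℕ) = 0) := by
  simp [F1, fromRel_adj, Fin.ext_iff, -Fin.val_eq_zero_iff]; omega

lemma F1_xy (t : Fin 2) (j : Fin n) : (F1 n).Adj (.inl t) (.inr (.inl j)) ↔
    (t:ℕ) = 0 ∧ (j:ℕ) = 0 := by
  simp [F1, fromRel_adj, Fin.ext_iff, -Fin.val_eq_zero_iff]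
  exact ⟨fun ⟨a, h1, h2, h3⟩ => ⟨h2, by omega⟩, fun ⟨h1, h2⟩ => ⟨j, h2, h1, rfl⟩⟩

lemma F1_xz (t : Fin 2) (j : Fin n) : (F1 n).Adj (.inl t) (.inr (.inr j)) ↔
    (t:ℕ) = 0 ∧ (j:ℕ) = 0 := by
  simp [F1, fromRel_adj, Fin.ext_iff, -Fin.val_eq_zero_iff]
  exact ⟨fun ⟨a, h1, h2, h3⟩ => ⟨h2, by omega⟩, fun ⟨h1, h2⟩ => ⟨j, h2, h1, rfl⟩⟩

lemma F1_yy (i j : Fin n) : (F1 n).Adj (.inr (.inl i)) (.inr (.inl j)) ↔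
    ((i:ℕ)+1 = j ∨ (j:ℕ)+1 = i) := by
  constructor
  · intro h
    simp [F1, fromRel_adj, Fin.ext_iff] at h
    obtain ⟨hne, (⟨a, b, h1, h2, h3⟩ | ⟨a, b, h1, h2, h3⟩)⟩ := h <;> omega
  · intro h
    show (SimpleGraph.fromRel _).Adj _ _
    rw [fromRel_adj]
    rcases h with h | h
    · exact ⟨by simp [Fin.ext_iff]; omega,
        Or.inl <| Or.inr <| Or.inr <| Or.inr <| Or.inl ⟨i, j, by omega, rfl, rfl⟩⟩
    · exact ⟨by simp [Fin.ext_iff]; omega,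
        Or.inr <| Or.inr <| Or.inr <| Or.inr <| Or.inl ⟨j, i, by omega, rfl, rfl⟩⟩

lemma F1_zz (i j : Fin n) : (F1 n).Adj (.inr (.inr i)) (.inr (.inr j)) ↔
    ((i:ℕ)+1 = j ∨ (j:ℕ)+1 = i) := by
  constructor
  · intro h
    simp [F1, fromRel_adj, Fin.ext_iff] at h
    obtain ⟨hne, (⟨a, b, h1, h2, h3⟩ | ⟨a, b, h1, h2, h3⟩)⟩ := h <;> omega
  · intro h
    show (SimpleGraph.fromRel _).Adj _ _
    rw [fromRel_adj]
    rcases h with h | h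
    · exact ⟨by simp [Fin.ext_iff]; omega,
        Or.inl <| Or.inr <| Or.inr <| Or.inr <| Or.inr ⟨i, j, by omega, rfl, rfl⟩⟩
    · exact ⟨by simp [Fin.ext_iff]; omega,
        Or.inr <| Or.inr <| Or.inr <| Or.inr <| Or.inr ⟨j, i, by omega, rfl, rfl⟩⟩

lemma F1_yz (i j : Fin n) : ¬ (F1 n).Adj (.inr (.inl i)) (.inr (.inr j)) := by
  simp [F1, fromRel_adj]

end Aux

namespace Aux
open SimpleGraph
variable {n : ℕ}

lemma F2_xy (j : Fin n) : (F2 n).Adj (.inl ()) (.inr (.inl j)) ↔ (j:ℕ) = 0 := by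
  simp [F2, fromRel_adj, Fin.ext_iff]
  exact ⟨fun ⟨a, h1, h2⟩ => by omega, fun h => ⟨j, h, rfl⟩⟩

lemma F2_xz (j : Fin n) : (F2 n).Adj (.inl ()) (.inr (.inr j)) ↔ (j:ℕ) = 0 := by
  simp [F2, fromRel_adj, Fin.ext_iff]
  exact ⟨fun ⟨a, h1, h2⟩ => by omega, fun h => ⟨j, h, rfl⟩⟩

lemma F2_yy (i j : Fin n) : (F2 n).Adj (.inr (.inl i)) (.inr (.inl j)) ↔
    ((i:ℕ)+1 = j ∨ (j:ℕ)+1 = i) := by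
  constructor
  · intro h
    simp [F2, fromRel_adj, Fin.ext_iff] at h
    obtain ⟨hne, (⟨a, b, h1, h2, h3⟩ | ⟨a, b, h1, h2, h3⟩)⟩ := h <;> omega
  · intro h
    show (SimpleGraph.fromRel _).Adj _ _
    rw [fromRel_adj]
    rcases h with h | h
    · exact ⟨by simp [Fin.ext_iff]; omega,
        Or.inl <| Or.inr <| Or.inr <| Or.inr <| Or.inl ⟨i, j, by omega, rfl, rfl⟩⟩
    · exact ⟨by simp [Fin.ext_iff]; omega,
        Or.inr <| Or.inr <| Or.inr <| Or.inr <| Or.inl ⟨j, i, by omega, rfl, rfl⟩⟩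

lemma F2_zz (i j : Fin n) : (F2 n).Adj (.inr (.inr i)) (.inr (.inr j)) ↔
    ((i:ℕ)+1 = j ∨ (j:ℕ)+1 = i) := by
  constructor
  · intro h
    simp [F2, fromRel_adj, Fin.ext_iff] at h
    obtain ⟨hne, (⟨a, b, h1, h2, h3⟩ | ⟨a, b, h1, h2, h3⟩)⟩ := h <;> omega
  · intro h
    show (SimpleGraph.fromRel _).Adj _ _
    rw [fromRel_adj]
    rcases h with h | h
    · exact ⟨by simp [Fin.ext_iff]; omega,
        Or.inl <| Or.inr <| Or.inr <| Or.inr <| Or.inr ⟨i, j, by omega, rfl, rfl⟩⟩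
    · exact ⟨by simp [Fin.ext_iff]; omega,
        Or.inr <| Or.inr <| Or.inr <| Or.inr <| Or.inr ⟨j, i, by omega, rfl, rfl⟩⟩

lemma F2_yz (i j : Fin n) : (F2 n).Adj (.inr (.inl i)) (.inr (.inr j)) ↔
    ((i:ℕ) = 0 ∧ (j:ℕ) = 0) := by
  constructor
  · intro h
    simp [F2, fromRel_adj, Fin.ext_iff] at h
    obtain ⟨a, b, h1, h2, h3, h4⟩ := h; omega
  · intro h
    show (SimpleGraph.fromRel _).Adj _ _
    rw [fromRel_adj]
    exact ⟨by simp, Or.inl <| Or.inr <| Or.inr <| Or.inl ⟨i, j, h.1, h.2, rfl, rfl⟩⟩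

lemma F4_xx (s t : Fin 2) : ¬ (F4 n).Adj (.inl s) (.inl t) := by
  simp [F4, fromRel_adj]

lemma F4_xy (t : Fin 2) (j : Fin n) : (F4 n).Adj (.inl t) (.inr (.inl j)) ↔ (j:ℕ) = 0 := by
  simp [F4, fromRel_adj, Fin.ext_iff, -Fin.val_eq_zero_iff, -Fin.exists_fin_two]
  exact ⟨fun ⟨a, b, h1, h2, h3⟩ => by omega, fun h => ⟨t, j, h, rfl, rfl⟩⟩

lemma F4_xz (t : Fin 2) (j : Fin n) : (F4 n).Adj (.inl t) (.inr (.inr j)) ↔ (j:ℕ) = 0 := by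
  simp [F4, fromRel_adj, Fin.ext_iff, -Fin.val_eq_zero_iff, -Fin.exists_fin_two]
  exact ⟨fun ⟨a, b, h1, h2, h3⟩ => by omega, fun h => ⟨t, j, h, rfl, rfl⟩⟩

lemma F4_yy (i j : Fin n) : (F4 n).Adj (.inr (.inl i)) (.inr (.inl j)) ↔
    ((i:ℕ)+1 = j ∨ (j:ℕ)+1 = i) := by
  constructor
  · intro h
    simp [F4, fromRel_adj, Fin.ext_iff] at h
    obtain ⟨hne, (⟨a, b, h1, h2, h3⟩ | ⟨a, b, h1, h2, h3⟩)⟩ := h <;> omega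
  · intro h
    show (SimpleGraph.fromRel _).Adj _ _
    rw [fromRel_adj]
    rcases h with h | h
    · exact ⟨by simp [Fin.ext_iff]; omega,
        Or.inl <| Or.inr <| Or.inr <| Or.inl ⟨i, j, by omega, rfl, rfl⟩⟩
    · exact ⟨by simp [Fin.ext_iff]; omega,
        Or.inr <| Or.inr <| Or.inr <| Or.inl ⟨j, i, by omega, rfl, rfl⟩⟩

lemma F4_zz (i j : Fin n) : (F4 n).Adj (.inr (.inr i)) (.inr (.inr j)) ↔
    ((i:ℕ)+1 = j ∨ (j:ℕ)+1 = i) := by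
  constructor
  · intro h
    simp [F4, fromRel_adj, Fin.ext_iff] at h
    obtain ⟨hne, (⟨a, b, h1, h2, h3⟩ | ⟨a, b, h1, h2, h3⟩)⟩ := h <;> omega
  · intro h
    show (SimpleGraph.fromRel _).Adj _ _
    rw [fromRel_adj]
    rcases h with h | h
    · exact ⟨by simp [Fin.ext_iff]; omega,
        Or.inl <| Or.inr <| Or.inr <| Or.inr ⟨i, j, by omega, rfl, rfl⟩⟩
    · exact ⟨by simp [Fin.ext_iff]; omega,
        Or.inr <| Or.inr <| Or.inr <| Or.inr ⟨j, i, by omega, rfl, rfl⟩⟩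

lemma F4_yz (i j : Fin n) : ¬ (F4 n).Adj (.inr (.inl i)) (.inr (.inr j)) := by
  simp [F4, fromRel_adj]

lemma F5_xx (s t : Fin 2) : (F5 n).Adj (.inl s) (.inl t) ↔
    ((s:ℕ) = 0 ∧ (t:ℕ) = 1) ∨ ((s:ℕ) = 1 ∧ (t:ℕ) = 0) := by
  simp [F5, fromRel_adj, Fin.ext_iff, -Fin.val_eq_zero_iff]; omega

lemma F5_xy (t : Fin 2) (j : Fin n) : (F5 n).Adj (.inl t) (.inr (.inl j)) ↔ (j:ℕ) = 0 := by
  simp [F5, fromRel_adj, Fin.ext_iff, -Fin.val_eq_zero_iff, -Fin.exists_fin_two]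
  exact ⟨fun ⟨a, b, h1, h2, h3⟩ => by omega, fun h => ⟨t, j, h, rfl, rfl⟩⟩

lemma F5_xz (t : Fin 2) (j : Fin n) : (F5 n).Adj (.inl t) (.inr (.inr j)) ↔ (j:ℕ) = 0 := by
  simp [F5, fromRel_adj, Fin.ext_iff, -Fin.val_eq_zero_iff, -Fin.exists_fin_two]
  exact ⟨fun ⟨a, b, h1, h2, h3⟩ => by omega, fun h => ⟨t, j, h, rfl, rfl⟩⟩

lemma F5_yy (i j : Fin n) : (F5 n).Adj (.inr (.inl i)) (.inr (.inl j)) ↔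
    ((i:ℕ)+1 = j ∨ (j:ℕ)+1 = i) := by
  constructor
  · intro h
    simp [F5, fromRel_adj, Fin.ext_iff] at h
    obtain ⟨hne, (⟨a, b, h1, h2, h3⟩ | ⟨a, b, h1, h2, h3⟩)⟩ := h <;> omega
  · intro h
    show (SimpleGraph.fromRel _).Adj _ _
    rw [fromRel_adj]
    rcases h with h | h
    · exact ⟨by simp [Fin.ext_iff]; omega,
        Or.inl <| Or.inr <| Or.inr <| Or.inr <| Or.inl ⟨i, j, by omega, rfl, rfl⟩⟩
    · exact ⟨by simp [Fin.ext_iff]; omega,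
        Or.inr <| Or.inr <| Or.inr <| Or.inr <| Or.inl ⟨j, i, by omega, rfl, rfl⟩⟩

lemma F5_zz (i j : Fin n) : (F5 n).Adj (.inr (.inr i)) (.inr (.inr j)) ↔
    ((i:ℕ)+1 = j ∨ (j:ℕ)+1 = i) := by
  constructor
  · intro h
    simp [F5, fromRel_adj, Fin.ext_iff] at h
    obtain ⟨hne, (⟨a, b, h1, h2, h3⟩ | ⟨a, b, h1, h2, h3⟩)⟩ := h <;> omega
  · intro h
    show (SimpleGraph.fromRel _).Adj _ _
    rw [fromRel_adj]
    rcases h with h | h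
    · exact ⟨by simp [Fin.ext_iff]; omega,
        Or.inl <| Or.inr <| Or.inr <| Or.inr <| Or.inr ⟨i, j, by omega, rfl, rfl⟩⟩
    · exact ⟨by simp [Fin.ext_iff]; omega,
        Or.inr <| Or.inr <| Or.inr <| Or.inr <| Or.inr ⟨j, i, by omega, rfl, rfl⟩⟩

lemma F5_yz (i j : Fin n) : ¬ (F5 n).Adj (.inr (.inl i)) (.inr (.inr j)) := by
  simp [F5, fromRel_adj]

lemma star_xy (m : ℕ) (u : Unit) (j : Fin m) : (_root_.starGraph m).Adj (.inl u) (.inr j) := by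
  simp [_root_.starGraph, completeBipartiteGraph]

lemma star_yy (m : ℕ) (i j : Fin m) : ¬ (_root_.starGraph m).Adj (.inr i) (.inr j) := by
  simp [_root_.starGraph, completeBipartiteGraph]

lemma star_xx (m : ℕ) (u v : Unit) : ¬ (_root_.starGraph m).Adj (.inl u) (.inl v) := by
  simp [_root_.starGraph, completeBipartiteGraph]

end Aux

namespace Aux
open SimpleGraph
variable {V : Type} {G : SimpleGraph V}

lemma hasF1 {n : ℕ} (x1 x2 : V) (y z : ℕ → V)
    (hyinj : ∀ i j, i < n → j < n → y i = y j → i = j)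
    (hzinj : ∀ i j, i < n → j < n → z i = z j → i = j)
    (hyz_ne : ∀ i j, i < n → j < n → y i ≠ z j)
    (hx1y_ne : ∀ i, i < n → x1 ≠ y i) (hx1z_ne : ∀ i, i < n → x1 ≠ z i)
    (hx2y_ne : ∀ i, i < n → x2 ≠ y i) (hx2z_ne : ∀ i, i < n → x2 ≠ z i)
    (hx12_ne : x1 ≠ x2)
    (hx12 : G.Adj x1 x2)
    (hxy0 : 0 < n → G.Adj x1 (y 0)) (hxz0 : 0 < n → G.Adj x1 (z 0))
    (hychain : ∀ i, i + 1 < n → G.Adj (y i) (y (i+1)))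
    (hzchain : ∀ i, i + 1 < n → G.Adj (z i) (z (i+1)))
    (hyy : ∀ i j, i < n → j < n → ¬(i + 1 = j ∨ j + 1 = i) → ¬ G.Adj (y i) (y j))
    (hzz : ∀ i j, i < n → j < n → ¬(i + 1 = j ∨ j + 1 = i) → ¬ G.Adj (z i) (z j))
    (hyz : ∀ i j, i < n → j < n → ¬ G.Adj (y i) (z j))
    (hx1y : ∀ i, 0 < i → i < n → ¬ G.Adj x1 (y i))
    (hx1z : ∀ i, 0 < i → i < n → ¬ G.Adj x1 (z i))
    (hx2y : ∀ i, i < n → ¬ G.Adj x2 (y i))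
    (hx2z : ∀ i, i < n → ¬ G.Adj x2 (z i)) :
    HasInducedCopy G (F1 n) := by
  classical
  have key : ∀ a b : Fin 2 ⊕ Fin n ⊕ Fin n,
      G.Adj (Sum.elim (fun t : Fin 2 => if (t:ℕ) = 0 then x1 else x2)
        (Sum.elim (fun i : Fin n => y i) (fun i : Fin n => z i)) a)
      (Sum.elim (fun t : Fin 2 => if (t:ℕ) = 0 then x1 else x2)
        (Sum.elim (fun i : Fin n => y i) (fun i : Fin n => z i)) b) ↔ (F1 n).Adj a b := by
    rintro (s | (i | i)) (t | (j | j)) <;>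
        simp only [Sum.elim_inl, Sum.elim_inr]
    · rw [F1_xx]
      have hs := s.isLt; have ht := t.isLt
      by_cases hs0 : (s:ℕ) = 0 <;> by_cases ht0 : (t:ℕ) = 0 <;>
        simp [hs0, ht0, G.irrefl, hx12, hx12.symm] <;> omega
    · rw [F1_xy]
      have hj := j.isLt
      by_cases hs0 : (s:ℕ) = 0 <;> simp [hs0]
      · by_cases hj0 : (j:ℕ) = 0
        · simpa [hj0] using hxy0 (by omega)
        · simpa [hj0] using hx1y j (by omega) hj
      · exact hx2y j hj
    · rw [F1_xz]
      have hj := j.isLt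
      by_cases hs0 : (s:ℕ) = 0 <;> simp [hs0]
      · by_cases hj0 : (j:ℕ) = 0
        · simpa [hj0] using hxz0 (by omega)
        · simpa [hj0] using hx1z j (by omega) hj
      · exact hx2z j hj
    · rw [show ((F1 n).Adj (Sum.inr (Sum.inl i)) (Sum.inl t)) =
          ((F1 n).Adj (Sum.inl t) (Sum.inr (Sum.inl i))) from propext (adj_comm _ _ _),
        F1_xy, G.adj_comm]
      have hi := i.isLt
      by_cases ht0 : (t:ℕ) = 0 <;> simp [ht0]
      · by_cases hi0 : (i:ℕ) = 0
        · simpa [hi0] using hxy0 (by omega)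
        · simpa [hi0] using hx1y i (by omega) hi
      · exact hx2y i hi
    · rw [F1_yy]
      have hi := i.isLt; have hj := j.isLt
      constructor
      · intro h
        by_contra hc
        exact hyy i j hi hj (by omega) h
      · rintro (h | h)
        · have := hychain i (by omega); rwa [show (i:ℕ) + 1 = (j:ℕ) from h] at this
        · have := hychain j (by omega); rw [show (j:ℕ) + 1 = (i:ℕ) from h] at this
          exact this.symm
    · rw [show ((F1 n).Adj (Sum.inr (Sum.inl i)) (Sum.inr (Sum.inr j))) = False from
          by simp [F1_yz], iff_false]
      exact hyz i j i.isLt j.isLt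
    · rw [show ((F1 n).Adj (Sum.inr (Sum.inr i)) (Sum.inl t)) =
          ((F1 n).Adj (Sum.inl t) (Sum.inr (Sum.inr i))) from propext (adj_comm _ _ _),
        F1_xz, G.adj_comm]
      have hi := i.isLt
      by_cases ht0 : (t:ℕ) = 0 <;> simp [ht0]
      · by_cases hi0 : (i:ℕ) = 0
        · simpa [hi0] using hxz0 (by omega)
        · simpa [hi0] using hx1z i (by omega) hi
      · exact hx2z i hi
    · rw [show ((F1 n).Adj (Sum.inr (Sum.inr i)) (Sum.inr (Sum.inl j))) = False from
          by simp [(F1 n).adj_comm, F1_yz], iff_false, G.adj_comm]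
      exact hyz j i j.isLt i.isLt
    · rw [F1_zz]
      have hi := i.isLt; have hj := j.isLt
      constructor
      · intro h
        by_contra hc
        exact hzz i j hi hj (by omega) h
      · rintro (h | h)
        · have := hzchain i (by omega); rwa [show (i:ℕ) + 1 = (j:ℕ) from h] at this
        · have := hzchain j (by omega); rw [show (j:ℕ) + 1 = (i:ℕ) from h] at this
          exact this.symm
  refine ⟨⟨_, ?_⟩, key⟩
  rintro (s | (i | i)) (t | (j | j)) h <;>
      simp only [Sum.elim_inl, Sum.elim_inr] at h
  · split_ifs at h with hs0 ht0 ht0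
    · exact congrArg Sum.inl (Fin.ext (by omega))
    · exact absurd h hx12_ne
    · exact absurd h.symm hx12_ne
    · have hs := s.isLt; have ht := t.isLt
      exact congrArg Sum.inl (Fin.ext (by omega))
  · split_ifs at h with hs0
    · exact absurd h (hx1y_ne j j.isLt)
    · exact absurd h (hx2y_ne j j.isLt)
  · split_ifs at h with hs0
    · exact absurd h (hx1z_ne j j.isLt)
    · exact absurd h (hx2z_ne j j.isLt)
  · split_ifs at h with ht0
    · exact absurd h.symm (hx1y_ne i i.isLt)
    · exact absurd h.symm (hx2y_ne i i.isLt)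
  · rw [show i = j from Fin.ext (hyinj i j i.isLt j.isLt h)]
  · exact absurd h (hyz_ne i j i.isLt j.isLt)
  · split_ifs at h with ht0
    · exact absurd h.symm (hx1z_ne i i.isLt)
    · exact absurd h.symm (hx2z_ne i i.isLt)
  · exact absurd h.symm (hyz_ne j i j.isLt i.isLt)
  · rw [show i = j from Fin.ext (hzinj i j i.isLt j.isLt h)]

end Aux

namespace Aux
open SimpleGraph
variable {V : Type} {G : SimpleGraph V}

lemma hasF2 {n : ℕ} (x1 : V) (y z : ℕ → V)
    (hyinj : ∀ i j, i < n → j < n → y i = y j → i = j)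
    (hzinj : ∀ i j, i < n → j < n → z i = z j → i = j)
    (hyz_ne : ∀ i j, i < n → j < n → y i ≠ z j)
    (hx1y_ne : ∀ i, i < n → x1 ≠ y i) (hx1z_ne : ∀ i, i < n → x1 ≠ z i)
    (hxy0 : 0 < n → G.Adj x1 (y 0)) (hxz0 : 0 < n → G.Adj x1 (z 0))
    (hy0z0 : 0 < n → G.Adj (y 0) (z 0))
    (hychain : ∀ i, i + 1 < n → G.Adj (y i) (y (i+1)))
    (hzchain : ∀ i, i + 1 < n → G.Adj (z i) (z (i+1)))
    (hyy : ∀ i j, i < n → j < n → ¬(i + 1 = j ∨ j + 1 = i) → ¬ G.Adj (y i) (y j))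
    (hzz : ∀ i j, i < n → j < n → ¬(i + 1 = j ∨ j + 1 = i) → ¬ G.Adj (z i) (z j))
    (hyz : ∀ i j, i < n → j < n → ¬(i = 0 ∧ j = 0) → ¬ G.Adj (y i) (z j))
    (hx1y : ∀ i, 0 < i → i < n → ¬ G.Adj x1 (y i))
    (hx1z : ∀ i, 0 < i → i < n → ¬ G.Adj x1 (z i)) :
    HasInducedCopy G (F2 n) := by
  classical
  have key : ∀ a b : Unit ⊕ Fin n ⊕ Fin n,
      G.Adj (Sum.elim (fun _ : Unit => x1)
        (Sum.elim (fun i : Fin n => y i) (fun i : Fin n => z i)) a)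
      (Sum.elim (fun _ : Unit => x1)
        (Sum.elim (fun i : Fin n => y i) (fun i : Fin n => z i)) b) ↔ (F2 n).Adj a b := by
    rintro (⟨⟩ | (i | i)) (⟨⟩ | (j | j)) <;>
        simp only [Sum.elim_inl, Sum.elim_inr]
    · simp [G.irrefl, (F2 n).irrefl]
    · rw [F2_xy]
      have hj := j.isLt
      by_cases hj0 : (j:ℕ) = 0
      · simpa [hj0] using hxy0 (by omega)
      · simpa [hj0] using hx1y j (by omega) hj
    · rw [F2_xz]
      have hj := j.isLt
      by_cases hj0 : (j:ℕ) = 0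
      · simpa [hj0] using hxz0 (by omega)
      · simpa [hj0] using hx1z j (by omega) hj
    · rw [show ((F2 n).Adj (Sum.inr (Sum.inl i)) (Sum.inl ())) =
          ((F2 n).Adj (Sum.inl ()) (Sum.inr (Sum.inl i))) from propext (adj_comm _ _ _),
        F2_xy, G.adj_comm]
      have hi := i.isLt
      by_cases hi0 : (i:ℕ) = 0
      · simpa [hi0] using hxy0 (by omega)
      · simpa [hi0] using hx1y i (by omega) hi
    · rw [F2_yy]
      have hi := i.isLt; have hj := j.isLt
      constructor
      · intro h; by_contra hc; exact hyy i j hi hj (by omega) h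
      · rintro (h | h)
        · have := hychain i (by omega); rwa [show (i:ℕ) + 1 = (j:ℕ) from h] at this
        · have := hychain j (by omega); rw [show (j:ℕ) + 1 = (i:ℕ) from h] at this
          exact this.symm
    · rw [F2_yz]
      have hi := i.isLt; have hj := j.isLt
      constructor
      · intro h; by_contra hc; exact hyz i j hi hj (by omega) h
      · rintro ⟨h1, h2⟩
        rw [h1, h2]; exact hy0z0 (by omega)
    · rw [show ((F2 n).Adj (Sum.inr (Sum.inr i)) (Sum.inl ())) =
          ((F2 n).Adj (Sum.inl ()) (Sum.inr (Sum.inr i))) from propext (adj_comm _ _ _),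
        F2_xz, G.adj_comm]
      have hi := i.isLt
      by_cases hi0 : (i:ℕ) = 0
      · simpa [hi0] using hxz0 (by omega)
      · simpa [hi0] using hx1z i (by omega) hi
    · rw [show ((F2 n).Adj (Sum.inr (Sum.inr i)) (Sum.inr (Sum.inl j))) =
          ((F2 n).Adj (Sum.inr (Sum.inl j)) (Sum.inr (Sum.inr i))) from propext (adj_comm _ _ _),
        F2_yz, G.adj_comm]
      have hi := i.isLt; have hj := j.isLt
      constructor
      · intro h; by_contra hc; exact hyz j i hj hi (by omega) h
      · rintro ⟨h1, h2⟩
        rw [h1, h2]; exact hy0z0 (by omega)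
    · rw [F2_zz]
      have hi := i.isLt; have hj := j.isLt
      constructor
      · intro h; by_contra hc; exact hzz i j hi hj (by omega) h
      · rintro (h | h)
        · have := hzchain i (by omega); rwa [show (i:ℕ) + 1 = (j:ℕ) from h] at this
        · have := hzchain j (by omega); rw [show (j:ℕ) + 1 = (i:ℕ) from h] at this
          exact this.symm
  refine ⟨⟨_, ?_⟩, key⟩
  rintro (⟨⟩ | (i | i)) (⟨⟩ | (j | j)) h <;>
      simp only [Sum.elim_inl, Sum.elim_inr] at h
  · rfl
  · exact absurd h (hx1y_ne j j.isLt)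
  · exact absurd h (hx1z_ne j j.isLt)
  · exact absurd h.symm (hx1y_ne i i.isLt)
  · rw [show i = j from Fin.ext (hyinj i j i.isLt j.isLt h)]
  · exact absurd h (hyz_ne i j i.isLt j.isLt)
  · exact absurd h.symm (hx1z_ne i i.isLt)
  · exact absurd h.symm (hyz_ne j i j.isLt i.isLt)
  · rw [show i = j from Fin.ext (hzinj i j i.isLt j.isLt h)]

end Aux

namespace Aux
open SimpleGraph
variable {V : Type} {G : SimpleGraph V}

lemma hasF45 {n : ℕ} (x1 x2 : V) (y z : ℕ → V) (hadj : Bool)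
    (hyinj : ∀ i j, i < n → j < n → y i = y j → i = j)
    (hzinj : ∀ i j, i < n → j < n → z i = z j → i = j)
    (hyz_ne : ∀ i j, i < n → j < n → y i ≠ z j)
    (hx1y_ne : ∀ i, i < n → x1 ≠ y i) (hx1z_ne : ∀ i, i < n → x1 ≠ z i)
    (hx2y_ne : ∀ i, i < n → x2 ≠ y i) (hx2z_ne : ∀ i, i < n → x2 ≠ z i)
    (hx12_ne : x1 ≠ x2)
    (hx12iff : G.Adj x1 x2 ↔ hadj = true)
    (hx1y0 : 0 < n → G.Adj x1 (y 0)) (hx1z0 : 0 < n → G.Adj x1 (z 0))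
    (hx2y0 : 0 < n → G.Adj x2 (y 0)) (hx2z0 : 0 < n → G.Adj x2 (z 0))
    (hychain : ∀ i, i + 1 < n → G.Adj (y i) (y (i+1)))
    (hzchain : ∀ i, i + 1 < n → G.Adj (z i) (z (i+1)))
    (hyy : ∀ i j, i < n → j < n → ¬(i + 1 = j ∨ j + 1 = i) → ¬ G.Adj (y i) (y j))
    (hzz : ∀ i j, i < n → j < n → ¬(i + 1 = j ∨ j + 1 = i) → ¬ G.Adj (z i) (z j))
    (hyz : ∀ i j, i < n → j < n → ¬ G.Adj (y i) (z j))
    (hx1y : ∀ i, 0 < i → i < n → ¬ G.Adj x1 (y i))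
    (hx1z : ∀ i, 0 < i → i < n → ¬ G.Adj x1 (z i))
    (hx2y : ∀ i, 0 < i → i < n → ¬ G.Adj x2 (y i))
    (hx2z : ∀ i, 0 < i → i < n → ¬ G.Adj x2 (z i)) :
    HasInducedCopy G (if hadj then F5 n else F4 n) := by
  classical
  set H : SimpleGraph (Fin 2 ⊕ Fin n ⊕ Fin n) := if hadj then F5 n else F4 n with hH
  have Hxx : ∀ s t : Fin 2, H.Adj (.inl s) (.inl t) ↔
      (hadj = true ∧ (((s:ℕ) = 0 ∧ (t:ℕ) = 1) ∨ ((s:ℕ) = 1 ∧ (t:ℕ) = 0))) := by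
    intro s t; cases hadj <;> simp [hH, F5_xx, F4_xx]
  have Hxy : ∀ (t : Fin 2) (j : Fin n), H.Adj (.inl t) (.inr (.inl j)) ↔ (j:ℕ) = 0 := by
    intro t j; cases hadj <;> simp [hH, F5_xy, F4_xy]
  have Hxz : ∀ (t : Fin 2) (j : Fin n), H.Adj (.inl t) (.inr (.inr j)) ↔ (j:ℕ) = 0 := by
    intro t j; cases hadj <;> simp [hH, F5_xz, F4_xz]
  have Hyy : ∀ (i j : Fin n), H.Adj (.inr (.inl i)) (.inr (.inl j)) ↔
      ((i:ℕ)+1 = j ∨ (j:ℕ)+1 = i) := by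
    intro i j; cases hadj <;> simp [hH, F5_yy, F4_yy]
  have Hzz : ∀ (i j : Fin n), H.Adj (.inr (.inr i)) (.inr (.inr j)) ↔
      ((i:ℕ)+1 = j ∨ (j:ℕ)+1 = i) := by
    intro i j; cases hadj <;> simp [hH, F5_zz, F4_zz]
  have Hyz : ∀ (i j : Fin n), ¬ H.Adj (.inr (.inl i)) (.inr (.inr j)) := by
    intro i j; cases hadj <;> simp [hH, F5_yz, F4_yz]
  have headY : ∀ (s : Fin 2) (j : Fin n),
      G.Adj (if (s:ℕ) = 0 then x1 else x2) (y (j:ℕ)) ↔ (j:ℕ) = 0 := by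
    intro s j
    have hj := j.isLt
    by_cases hs0 : (s:ℕ) = 0
    · rw [if_pos hs0]
      by_cases hj0 : (j:ℕ) = 0
      · rw [hj0]; simp [hx1y0 (by omega)]
      · simp [hj0, hx1y j (by omega) hj]
    · rw [if_neg hs0]
      by_cases hj0 : (j:ℕ) = 0
      · rw [hj0]; simp [hx2y0 (by omega)]
      · simp [hj0, hx2y j (by omega) hj]
  have headZ : ∀ (s : Fin 2) (j : Fin n),
      G.Adj (if (s:ℕ) = 0 then x1 else x2) (z (j:ℕ)) ↔ (j:ℕ) = 0 := by
    intro s j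
    have hj := j.isLt
    by_cases hs0 : (s:ℕ) = 0
    · rw [if_pos hs0]
      by_cases hj0 : (j:ℕ) = 0
      · rw [hj0]; simp [hx1z0 (by omega)]
      · simp [hj0, hx1z j (by omega) hj]
    · rw [if_neg hs0]
      by_cases hj0 : (j:ℕ) = 0
      · rw [hj0]; simp [hx2z0 (by omega)]
      · simp [hj0, hx2z j (by omega) hj]
  have key : ∀ a b : Fin 2 ⊕ Fin n ⊕ Fin n,
      G.Adj (Sum.elim (fun t : Fin 2 => if (t:ℕ) = 0 then x1 else x2)
        (Sum.elim (fun i : Fin n => y i) (fun i : Fin n => z i)) a)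
      (Sum.elim (fun t : Fin 2 => if (t:ℕ) = 0 then x1 else x2)
        (Sum.elim (fun i : Fin n => y i) (fun i : Fin n => z i)) b) ↔ H.Adj a b := by
    rintro (s | (i | i)) (t | (j | j)) <;>
        simp only [Sum.elim_inl, Sum.elim_inr]
    · rw [Hxx]
      have hs := s.isLt; have ht := t.isLt
      by_cases hs0 : (s:ℕ) = 0 <;> by_cases ht0 : (t:ℕ) = 0
      · rw [if_pos hs0, if_pos ht0]
        constructor
        · intro h; exact (G.irrefl h).elim
        · rintro ⟨-, h⟩; omega
      · rw [if_pos hs0, if_neg ht0, hx12iff]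
        constructor
        · intro h; exact ⟨h, Or.inl ⟨hs0, by omega⟩⟩
        · exact fun h => h.1
      · rw [if_neg hs0, if_pos ht0, G.adj_comm, hx12iff]
        constructor
        · intro h; exact ⟨h, Or.inr ⟨by omega, ht0⟩⟩
        · exact fun h => h.1
      · rw [if_neg hs0, if_neg ht0]
        constructor
        · intro h; exact (G.irrefl h).elim
        · rintro ⟨-, h⟩; omega
    · rw [Hxy]; exact headY s j
    · rw [Hxz]; exact headZ s j
    · rw [show (H.Adj (Sum.inr (Sum.inl i)) (Sum.inl t)) =
          (H.Adj (Sum.inl t) (Sum.inr (Sum.inl i))) from propext (adj_comm _ _ _),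
        Hxy, G.adj_comm]
      exact headY t i
    · rw [Hyy]
      have hi := i.isLt; have hj := j.isLt
      constructor
      · intro h; by_contra hc; exact hyy i j hi hj (by omega) h
      · rintro (h | h)
        · have := hychain i (by omega); rwa [show (i:ℕ) + 1 = (j:ℕ) from h] at this
        · have := hychain j (by omega); rw [show (j:ℕ) + 1 = (i:ℕ) from h] at this
          exact this.symm
    · rw [show (H.Adj (Sum.inr (Sum.inl i)) (Sum.inr (Sum.inr j))) = False from
          by simp [Hyz], iff_false]
      exact hyz i j i.isLt j.isLt
    · rw [show (H.Adj (Sum.inr (Sum.inr i)) (Sum.inl t)) =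
          (H.Adj (Sum.inl t) (Sum.inr (Sum.inr i))) from propext (adj_comm _ _ _),
        Hxz, G.adj_comm]
      exact headZ t i
    · rw [show (H.Adj (Sum.inr (Sum.inr i)) (Sum.inr (Sum.inl j))) = False from
          by simp [(H.adj_comm _ _ : H.Adj _ _ ↔ _), Hyz], iff_false, G.adj_comm]
      exact hyz j i j.isLt i.isLt
    · rw [Hzz]
      have hi := i.isLt; have hj := j.isLt
      constructor
      · intro h; by_contra hc; exact hzz i j hi hj (by omega) h
      · rintro (h | h)
        · have := hzchain i (by omega); rwa [show (i:ℕ) + 1 = (j:ℕ) from h] at this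
        · have := hzchain j (by omega); rw [show (j:ℕ) + 1 = (i:ℕ) from h] at this
          exact this.symm
  refine ⟨⟨_, ?_⟩, key⟩
  rintro (s | (i | i)) (t | (j | j)) h <;>
      simp only [Sum.elim_inl, Sum.elim_inr] at h
  · split_ifs at h with hs0 ht0 ht0
    · exact congrArg Sum.inl (Fin.ext (by omega))
    · exact absurd h hx12_ne
    · exact absurd h.symm hx12_ne
    · have hs := s.isLt; have ht := t.isLt
      exact congrArg Sum.inl (Fin.ext (by omega))
  · split_ifs at h with hs0
    · exact absurd h (hx1y_ne j j.isLt)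
    · exact absurd h (hx2y_ne j j.isLt)
  · split_ifs at h with hs0
    · exact absurd h (hx1z_ne j j.isLt)
    · exact absurd h (hx2z_ne j j.isLt)
  · split_ifs at h with ht0
    · exact absurd h.symm (hx1y_ne i i.isLt)
    · exact absurd h.symm (hx2y_ne i i.isLt)
  · rw [show i = j from Fin.ext (hyinj i j i.isLt j.isLt h)]
  · exact absurd h (hyz_ne i j i.isLt j.isLt)
  · split_ifs at h with ht0
    · exact absurd h.symm (hx1z_ne i i.isLt)
    · exact absurd h.symm (hx2z_ne i i.isLt)
  · exact absurd h.symm (hyz_ne j i j.isLt i.isLt)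
  · rw [show i = j from Fin.ext (hzinj i j i.isLt j.isLt h)]

lemma hasStar {m : ℕ} (c : V) (w : ℕ → V)
    (hwinj : ∀ i j, i < m → j < m → w i = w j → i = j)
    (hcw_ne : ∀ i, i < m → c ≠ w i)
    (hadj : ∀ i, i < m → G.Adj c (w i))
    (hnadj : ∀ i j, i < m → j < m → ¬ G.Adj (w i) (w j)) :
    HasInducedCopy G (_root_.starGraph m) := by
  classical
  have key : ∀ a b : Unit ⊕ Fin m,
      G.Adj (Sum.elim (fun _ : Unit => c) (fun i : Fin m => w i) a)
        (Sum.elim (fun _ : Unit => c) (fun i : Fin m => w i) b) ↔ (_root_.starGraph m).Adj a b := by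
    rintro (⟨⟩ | i) (⟨⟩ | j) <;> simp only [Sum.elim_inl, Sum.elim_inr]
    · simp [G.irrefl, star_xx]
    · simp [star_xy, hadj j j.isLt]
    · simp [star_xy m i, ((_root_.starGraph m).adj_comm _ _ : (_root_.starGraph m).Adj _ _ ↔ _),
        G.adj_comm, hadj i i.isLt]
    · simp [star_yy, hnadj i j i.isLt j.isLt]
  refine ⟨⟨_, ?_⟩, key⟩
  rintro (⟨⟩ | i) (⟨⟩ | j) h <;> simp only [Sum.elim_inl, Sum.elim_inr] at h
  · rfl
  · exact absurd h (hcw_ne j j.isLt)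
  · exact absurd h.symm (hcw_ne i i.isLt)
  · rw [show i = j from Fin.ext (hwinj i j i.isLt j.isLt h)]

lemma hasClique {m : ℕ} (w : ℕ → V)
    (hwinj : ∀ i j, i < m → j < m → w i = w j → i = j)
    (hadj : ∀ i j, i < m → j < m → i ≠ j → G.Adj (w i) (w j)) :
    HasInducedCopy G (completeGraph (Fin m)) := by
  classical
  refine ⟨⟨fun i : Fin m => w i, ?_⟩, ?_⟩
  · intro i j h
    exact Fin.ext (hwinj i j i.isLt j.isLt h)
  · intro i j
    simp only [completeGraph, top_adj]
    constructor
    · intro h hij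
      rw [hij] at h; exact G.irrefl h
    · intro hij
      exact hadj i j i.isLt j.isLt (fun e => hij (Fin.ext e))
end Aux

namespace Aux
open SimpleGraph Finset

def Rnum : ℕ → ℕ → ℕ
  | 0, _ => 0
  | _+1, 0 => 0
  | s+1, t+1 => Rnum s (t+1) + Rnum (s+1) t + 1

lemma ramseyAux {V : Type} (G : SimpleGraph V) (k : ℕ) :
    ∀ (s t : ℕ), s + t ≤ k → ∀ (A : Finset V), Rnum s t ≤ A.card →
      (∃ B ⊆ A, B.card = s ∧ ∀ u ∈ B, ∀ v ∈ B, u ≠ v → G.Adj u v) ∨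
      (∃ B ⊆ A, B.card = t ∧ ∀ u ∈ B, ∀ v ∈ B, u ≠ v → ¬ G.Adj u v) := by
  classical
  induction k with
  | zero =>
    intro s t hst A hA
    have hs : s = 0 := by omega
    subst hs
    exact Or.inl ⟨∅, empty_subset _, card_empty, by simp⟩
  | succ k IH =>
  intro s t hst A hA
  match s, t with
  | 0, t => exact Or.inl ⟨∅, empty_subset _, card_empty, by simp⟩
  | s+1, 0 => exact Or.inr ⟨∅, empty_subset _, card_empty, by simp⟩
  | s+1, t+1 =>
    have hA1 : 1 ≤ A.card := le_trans (by simp [Rnum]) hA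
    obtain ⟨v, hv⟩ := card_pos.mp hA1
    set N := (A.erase v).filter (fun u => G.Adj v u) with hN
    set M := (A.erase v).filter (fun u => ¬ G.Adj v u) with hM
    have hNM : N.card + M.card = A.card - 1 := by
      rw [hN, hM, card_filter_add_card_filter_not, card_erase_of_mem hv]
    have hcases : Rnum s (t+1) ≤ N.card ∨ Rnum (s+1) t ≤ M.card := by
      simp only [Rnum] at hA; omega
    rcases hcases with hc | hc
    · rcases IH s (t+1) (by omega) N hc with ⟨B, hBsub, hBcard, hB⟩ | h
      · left
        have hvB : v ∉ B := fun hvB => (notMem_erase v A) (mem_filter.mp (hBsub hvB)).1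
        refine ⟨insert v B, ?_, ?_, ?_⟩
        · intro x hx
          rcases mem_insert.mp hx with rfl | hx
          · exact hv
          · exact mem_of_mem_erase (mem_filter.mp (hBsub hx)).1
        · rw [card_insert_of_notMem hvB, hBcard]
        · intro x hx y hy hxy
          have hstep : ∀ w ∈ B, G.Adj v w := fun w hw => (mem_filter.mp (hBsub hw)).2
          rcases mem_insert.mp hx with hxv | hx <;> rcases mem_insert.mp hy with hyv | hy
          · exact absurd (hxv.trans hyv.symm) hxy
          · rw [hxv]; exact hstep y hy
          · rw [hyv]; exact (hstep x hx).symm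
          · exact hB x hx y hy hxy
      · right
        obtain ⟨B, hBsub, hBcard, hB⟩ := h
        exact ⟨B, fun x hx => mem_of_mem_erase (mem_filter.mp (hBsub hx)).1, hBcard, hB⟩
    · rcases IH (s+1) t (by omega) M hc with h | ⟨B, hBsub, hBcard, hB⟩
      · left
        obtain ⟨B, hBsub, hBcard, hB⟩ := h
        exact ⟨B, fun x hx => mem_of_mem_erase (mem_filter.mp (hBsub hx)).1, hBcard, hB⟩
      · right
        have hvB : v ∉ B := fun hvB => (notMem_erase v A) (mem_filter.mp (hBsub hvB)).1
        refine ⟨insert v B, ?_, ?_, ?_⟩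
        · intro x hx
          rcases mem_insert.mp hx with rfl | hx
          · exact hv
          · exact mem_of_mem_erase (mem_filter.mp (hBsub hx)).1
        · rw [card_insert_of_notMem hvB, hBcard]
        · intro x hx y hy hxy
          have hstep : ∀ w ∈ B, ¬ G.Adj v w := fun w hw => (mem_filter.mp (hBsub hw)).2
          rcases mem_insert.mp hx with hxv | hx <;> rcases mem_insert.mp hy with hyv | hy
          · exact absurd (hxv.trans hyv.symm) hxy
          · rw [hxv]; exact hstep y hy
          · rw [hyv]; exact fun hadj => hstep x hx hadj.symm
          · exact hB x hx y hy hxy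

lemma ramsey {V : Type} (G : SimpleGraph V) (s t : ℕ) (A : Finset V) (hA : Rnum s t ≤ A.card) :
      (∃ B ⊆ A, B.card = s ∧ ∀ u ∈ B, ∀ v ∈ B, u ≠ v → G.Adj u v) ∨
      (∃ B ⊆ A, B.card = t ∧ ∀ u ∈ B, ∀ v ∈ B, u ≠ v → ¬ G.Adj u v) :=
  ramseyAux G (s+t) s t le_rfl A hA

end Aux

namespace Aux
open SimpleGraph Finset

def IPF {V : Type} (G : SimpleGraph V) (k : ℕ) (f : ℕ → V) : Prop :=
  (∀ i j, i < k → j < k → f i = f j → i = j) ∧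
  (∀ i j, i < k → j < k → (G.Adj (f i) (f j) ↔ (i + 1 = j ∨ j + 1 = i)))

variable {V : Type} {G : SimpleGraph V}

lemma IPF_le_card [Fintype V] {k f} (h : IPF G k f) : k ≤ Fintype.card V := by
  classical
  have := Finset.card_le_card_of_injOn (s := Finset.range k) (t := (Finset.univ : Finset V)) f
    (fun x _ => Finset.mem_univ (f x))
    (fun a ha b hb hab => h.1 a b (Finset.mem_range.mp ha) (Finset.mem_range.mp hb) hab)
  simpa using this

lemma exists_maxIPF [Fintype V] [Nonempty V] (G : SimpleGraph V) :
    ∃ m f, IPF G m f ∧ 1 ≤ m ∧ ∀ k g, IPF G k g → k ≤ m := by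
  classical
  set P : ℕ → Prop := fun k => ∃ f, IPF G k f with hP
  have hP1 : P 1 := by
    refine ⟨fun _ => Classical.arbitrary V, fun i j hi hj _ => by omega, fun i j hi hj => ?_⟩
    have hi0 : i = 0 := by omega
    have hj0 : j = 0 := by omega
    subst hi0; subst hj0
    simp [SimpleGraph.irrefl]
  have hcard : 1 ≤ Fintype.card V := Fintype.card_pos
  set m := Nat.findGreatest P (Fintype.card V) with hm
  obtain ⟨f, hf⟩ := Nat.findGreatest_spec hcard hP1
  refine ⟨m, f, hf, ?_, ?_⟩
  · exact Nat.le_findGreatest hcard hP1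
  · intro k g hk
    exact Nat.le_findGreatest (IPF_le_card hk) ⟨g, hk⟩

lemma walk_dist_bounds (hconn : G.Connected) :
    ∀ {u v : V} (p : G.Walk u v) (i : ℕ), i ≤ p.length →
      G.dist u (p.getVert i) ≤ i ∧ G.dist (p.getVert i) v ≤ p.length - i := by
  intro u v p
  induction p with
  | nil =>
    intro i hi
    have : i = 0 := by simpa using hi
    subst this
    simp [Walk.getVert_zero, SimpleGraph.dist_self]
  | @cons a b c h q ih =>
    intro i hi
    cases i with
    | zero =>
      refine ⟨by simp [Walk.getVert_zero, SimpleGraph.dist_self], ?_⟩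
      simpa using SimpleGraph.dist_le (Walk.cons h q)
    | succ i =>
      rw [Walk.getVert_cons_succ]
      have hi' : i ≤ q.length := by simpa using hi
      obtain ⟨h1, h2⟩ := ih i hi'
      constructor
      · calc G.dist a (q.getVert i) ≤ G.dist a b + G.dist b (q.getVert i) :=
              hconn.dist_triangle
          _ ≤ 1 + i := by
              have : G.dist a b = 1 := SimpleGraph.dist_eq_one_iff_adj.mpr h
              omega
          _ = i + 1 := by omega
      · simpa [Walk.length_cons] using h2.trans (by omega)

lemma geodesic_props (hconn : G.Connected) (u v : V) :
    ∃ q : ℕ → V, q 0 = u ∧ q (G.dist u v) = v ∧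
      (∀ i, i ≤ G.dist u v → G.dist u (q i) = i) ∧
      (∀ i, i ≤ G.dist u v → G.dist (q i) v = G.dist u v - i) ∧
      (∀ i, i + 1 ≤ G.dist u v → G.Adj (q i) (q (i+1))) := by
  classical
  obtain ⟨p, hp⟩ := (hconn u v).exists_walk_length_eq_dist
  set d := G.dist u v with hd
  have hub : ∀ i, i ≤ d → G.dist u (p.getVert i) ≤ i ∧ G.dist (p.getVert i) v ≤ d - i := by
    intro i hi
    have := walk_dist_bounds hconn p i (by omega)
    rwa [hp] at this
  have heq : ∀ i, i ≤ d → G.dist u (p.getVert i) = i ∧ G.dist (p.getVert i) v = d - i := by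
    intro i hi
    obtain ⟨h1, h2⟩ := hub i hi
    have htri : d ≤ G.dist u (p.getVert i) + G.dist (p.getVert i) v := hconn.dist_triangle
    omega
  refine ⟨fun i => p.getVert i, Walk.getVert_zero p, ?_, fun i hi => (heq i hi).1,
    fun i hi => (heq i hi).2, fun i hi => ?_⟩
  · rw [← hp]; exact Walk.getVert_length p
  · exact Walk.adj_getVert_succ p (by omega)

lemma geodesic_adj_iff (hconn : G.Connected) {u v : V} {q : ℕ → V}
    (hq : ∀ i, i ≤ G.dist u v → G.dist u (q i) = i) :
    ∀ i j, i ≤ G.dist u v → j ≤ G.dist u v → G.Adj (q i) (q j) → (i ≤ j + 1 ∧ j ≤ i + 1 ∧ i ≠ j) := by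
  intro i j hi hj hadj
  have h1 : G.dist u (q j) ≤ G.dist u (q i) + G.dist (q i) (q j) := hconn.dist_triangle
  have h2 : G.dist u (q i) ≤ G.dist u (q j) + G.dist (q j) (q i) := hconn.dist_triangle
  have h3 : G.dist (q i) (q j) = 1 := SimpleGraph.dist_eq_one_iff_adj.mpr hadj
  have h4 : G.dist (q j) (q i) = 1 := SimpleGraph.dist_eq_one_iff_adj.mpr hadj.symm
  have h5 : i ≠ j := by
    intro hij
    rw [hij] at hadj
    exact G.irrefl hadj
  rw [hq i hi, hq j hj] at *
  omega

lemma penultimate (hconn : G.Connected) {u w : V} {r : ℕ} (h : G.dist u w = r + 1) :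
    ∃ v, G.dist u v = r ∧ G.Adj v w := by
  classical
  obtain ⟨p, hp⟩ := (hconn u w).exists_walk_length_eq_dist
  cases hq : p.reverse with
  | nil =>
    exfalso
    have := Walk.length_reverse p
    rw [hq] at this
    simp at this
    omega
  | @cons a b c hadj q =>
    have hlen : q.length + 1 = r + 1 := by
      have := Walk.length_reverse p
      rw [hq] at this
      simpa [hp, h] using this
    refine ⟨b, ?_, hadj.symm⟩
    have hql : q.length = r := by omega
    have hle : G.dist u b ≤ r := by
      have h5 := SimpleGraph.dist_le q.reverse
      rwa [Walk.length_reverse, hql] at h5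
    have hge : r + 1 ≤ G.dist u b + 1 := by
      have h6 : G.dist u w ≤ G.dist u b + G.dist b w := hconn.dist_triangle
      have h7 : G.dist b w = 1 := SimpleGraph.dist_eq_one_iff_adj.mpr hadj.symm
      omega
    omega

lemma ball_card [Fintype V] [DecidableEq V] [DecidableRel G.Adj]
    (hconn : G.Connected) (D : ℕ)
    (hdeg : ∀ v : V, (Finset.univ.filter (fun w => G.Adj v w)).card ≤ D) (u : V) :
    ∀ r : ℕ, (Finset.univ.filter (fun v => G.dist u v ≤ r)).card ≤ (D+1)^r := by
  intro r
  induction r with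
  | zero =>
    have hsub : (Finset.univ.filter (fun v => G.dist u v ≤ 0)) ⊆ {u} := by
      intro v hv
      simp only [mem_filter, Nat.le_zero] at hv
      have := (hconn.dist_eq_zero_iff (u := u) (v := v)).mp hv.2
      simp [this]
    simpa using (card_le_card hsub).trans (by simp)
  | succ r ih =>
    have hsub : (Finset.univ.filter (fun v => G.dist u v ≤ r + 1)) ⊆
        (Finset.univ.filter (fun v => G.dist u v ≤ r)).biUnion
          (fun v => insert v (Finset.univ.filter (fun w => G.Adj v w))) := by
      intro w hw
      simp only [mem_filter, mem_univ, true_and] at hw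
      rcases Nat.lt_or_ge (G.dist u w) (r+1) with hlt | hge
      · exact mem_biUnion.mpr ⟨w, by simp [Nat.lt_succ_iff.mp hlt], by simp⟩
      · have heq : G.dist u w = r + 1 := by omega
        obtain ⟨v, hv1, hv2⟩ := penultimate hconn heq
        exact mem_biUnion.mpr ⟨v, by simp [hv1], by simp [hv2]⟩
    calc (Finset.univ.filter (fun v => G.dist u v ≤ r + 1)).card
        ≤ _ := card_le_card hsub
      _ ≤ ∑ v ∈ (Finset.univ.filter (fun v => G.dist u v ≤ r)),
            (insert v (Finset.univ.filter (fun w => G.Adj v w))).card := card_biUnion_le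
      _ ≤ ∑ v ∈ (Finset.univ.filter (fun v => G.dist u v ≤ r)), (D + 1) := by
          refine Finset.sum_le_sum (fun v _ => ?_)
          exact (card_insert_le _ _).trans (by have := hdeg v; omega)
      _ ≤ (D+1)^r * (D+1) := by
          rw [Finset.sum_const, smul_eq_mul]
          exact Nat.mul_le_mul_right _ ih
      _ = (D+1)^(r+1) := by ring

lemma enumFinset {W : Type} (C : Finset W) {n : ℕ} (hn : 0 < n) (hc : C.card = n) :
    ∃ w : ℕ → W, (∀ i, i < n → w i ∈ C) ∧ (∀ i j, i < n → j < n → w i = w j → i = j) := by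
  classical
  subst hc
  refine ⟨fun i => (C.equivFin.symm ⟨i % C.card, Nat.mod_lt _ hn⟩ : W),
    fun i hi => Subtype.mem _, fun i j hi hj hij => ?_⟩
  have h1 := C.equivFin.symm.injective (Subtype.ext hij)
  have h2 := congrArg Fin.val h1
  simp only at h2
  rwa [Nat.mod_eq_of_lt hi, Nat.mod_eq_of_lt hj] at h2
end Aux

namespace Aux
open SimpleGraph Finset

lemma pigeongap {S : Finset ℕ} {n base : ℕ} (hn : 1 ≤ n) (hcard : S.card ≤ 2*n - 2) :
    ∃ A, base ≤ A ∧ A + (n+2) ≤ base + (2*n-1)*(n+2) ∧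
      ∀ k ∈ S, ¬(A ≤ k ∧ k < A + (n+2)) := by
  classical
  by_contra hcl
  push_neg at hcl
  have hchoice : ∀ t : ℕ, ∃ k, t < 2*n - 1 →
      (k ∈ S ∧ base + t*(n+2) ≤ k ∧ k < base + t*(n+2) + (n+2)) := by
    intro t
    by_cases ht : t < 2*n - 1
    · obtain ⟨k, hk1, hk2, hk3⟩ := hcl (base + t*(n+2)) (Nat.le_add_right _ _)
        (by
          have h1 : t + 1 ≤ 2*n - 1 := by omega
          have h2 : (t+1)*(n+2) ≤ (2*n-1)*(n+2) := Nat.mul_le_mul_right _ h1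
          have h3 : t*(n+2) + (n+2) = (t+1)*(n+2) := by ring
          omega)
      exact ⟨k, fun _ => ⟨hk1, hk2, hk3⟩⟩
    · exact ⟨0, fun h => absurd h ht⟩
  choose g hg using hchoice
  have hinj : ∀ a ∈ Finset.range (2*n-1), ∀ b ∈ Finset.range (2*n-1), g a = g b → a = b := by
    intro a ha b hb hab
    rw [mem_range] at ha hb
    obtain ⟨-, ha2, ha3⟩ := hg a ha
    obtain ⟨-, hb2, hb3⟩ := hg b hb
    by_contra hne
    rcases Nat.lt_or_ge a b with hlt | hge
    · have h1 : a*(n+2) + (n+2) ≤ b*(n+2) := by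
        have h2 : (a+1)*(n+2) ≤ b*(n+2) := Nat.mul_le_mul_right _ (by omega)
        have h3 : a*(n+2) + (n+2) = (a+1)*(n+2) := by ring
        omega
      omega
    · have hlt' : b < a := by omega
      have h1 : b*(n+2) + (n+2) ≤ a*(n+2) := by
        have h2 : (b+1)*(n+2) ≤ a*(n+2) := Nat.mul_le_mul_right _ (by omega)
        have h3 : b*(n+2) + (n+2) = (b+1)*(n+2) := by ring
        omega
      omega
  have hle := Finset.card_le_card_of_injOn g (fun a ha => (hg a (mem_range.mp ha)).1) hinj
  rw [Finset.card_range] at hle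
  omega

lemma S_card_le {V : Type} {G : SimpleGraph V} {n : ℕ} (hn : 4 ≤ n)
    (hstar : ¬ HasInducedCopy G (_root_.starGraph n)) {m : ℕ} {p : ℕ → V}
    (hp : IPF G m p) {u : V} (hu : ∀ k, k < m → u ≠ p k)
    (S : Finset ℕ) (hS : ∀ k ∈ S, k < m ∧ G.Adj u (p k)) :
    S.card ≤ 2*n - 2 := by
  classical
  by_contra hc
  push_neg at hc
  have hsplit := Finset.card_filter_add_card_filter_not
    (s := S) (p := fun k => k % 2 = 0)
  have hcases : n ≤ (S.filter (fun k => k % 2 = 0)).card ∨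
      n ≤ (S.filter (fun k => ¬ k % 2 = 0)).card := by omega
  have main : ∀ T : Finset ℕ, T ⊆ S → n ≤ T.card →
      (∀ k ∈ T, ∀ k' ∈ T, k ≠ k' → k % 2 = k' % 2) → False := by
    intro T hTS hTcard hTpar
    obtain ⟨T', hT'T, hT'card⟩ := Finset.exists_subset_card_eq hTcard
    obtain ⟨w, hwmem, hwinj⟩ := enumFinset T' (by omega) hT'card
    have hmem : ∀ i, i < n → w i < m ∧ G.Adj u (p (w i)) := by
      intro i hi
      exact hS _ (hTS (hT'T (hwmem i hi)))
    refine hstar (hasStar u (fun i => p (w i)) ?_ ?_ ?_ ?_)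
    · intro i j hi hj hij
      exact hwinj i j hi hj (hp.1 _ _ (hmem i hi).1 (hmem j hj).1 hij)
    · intro i hi
      exact hu _ (hmem i hi).1
    · intro i hi
      exact (hmem i hi).2
    · intro i j hi hj hadj
      change G.Adj (p (w i)) (p (w j)) at hadj
      by_cases hij : w i = w j
      · rw [hij] at hadj
        exact G.irrefl hadj
      · have hpar := hTpar _ (hT'T (hwmem i hi)) _ (hT'T (hwmem j hj)) hij
        have := (hp.2 _ _ (hmem i hi).1 (hmem j hj).1).mp hadj
        omega
  rcases hcases with h | h
  · exact main _ (Finset.filter_subset _ _) h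
      (fun k hk k' hk' _ => by
        have h1 := (mem_filter.mp hk).2
        have h2 := (mem_filter.mp hk').2
        omega)
  · exact main _ (Finset.filter_subset _ _) h
      (fun k hk k' hk' _ => by
        have h1 := (mem_filter.mp hk).2
        have h2 := (mem_filter.mp hk').2
        omega)

lemma deg_le {V : Type} [Fintype V] [DecidableEq V] {G : SimpleGraph V} [DecidableRel G.Adj]
    {n : ℕ} (hn : 4 ≤ n)
    (hkn : ¬ HasInducedCopy G (completeGraph (Fin n)))
    (hstar : ¬ HasInducedCopy G (_root_.starGraph n)) (v : V) :
    (Finset.univ.filter (fun w => G.Adj v w)).card ≤ Rnum (n-1) n := by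
  by_contra hc
  push_neg at hc
  rcases ramsey G (n-1) n (Finset.univ.filter (fun w => G.Adj v w)) (le_of_lt hc) with
    ⟨B, hBsub, hBcard, hB⟩ | ⟨B, hBsub, hBcard, hB⟩
  · have hvB : v ∉ B := fun h => G.irrefl (mem_filter.mp (hBsub h)).2
    have hcard : (insert v B).card = n := by
      rw [card_insert_of_notMem hvB, hBcard]; omega
    obtain ⟨w, hwmem, hwinj⟩ := enumFinset (insert v B) (by omega) hcard
    refine hkn (hasClique w hwinj ?_)
    intro i j hi hj hij
    have hi' := hwmem i hi
    have hj' := hwmem j hj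
    have hne : w i ≠ w j := fun e => hij (hwinj i j hi hj e)
    rcases mem_insert.mp hi' with hiv | hiB <;> rcases mem_insert.mp hj' with hjv | hjB
    · exact absurd (hiv.trans hjv.symm) hne
    · rw [hiv]; exact (mem_filter.mp (hBsub hjB)).2
    · rw [hjv]; exact ((mem_filter.mp (hBsub hiB)).2).symm
    · exact hB _ hiB _ hjB hne
  · obtain ⟨w, hwmem, hwinj⟩ := enumFinset B (by omega) hBcard
    refine hstar (hasStar v (fun i => w i) hwinj ?_ ?_ ?_)
    · intro i hi e
      change v = w i at e
      have hvw := (mem_filter.mp (hBsub (hwmem i hi))).2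
      rw [← e] at hvw
      exact G.irrefl hvw
    · intro i hi
      exact (mem_filter.mp (hBsub (hwmem i hi))).2
    · intro i j hi hj hadj
      change G.Adj (w i) (w j) at hadj
      by_cases hij : w i = w j
      · rw [hij] at hadj; exact G.irrefl hadj
      · exact hB _ (hwmem i hi) _ (hwmem j hj) hij hadj
end Aux

namespace Aux
open SimpleGraph Finset

variable {V : Type} {G : SimpleGraph V}

lemma IPF_mono {k k' : ℕ} {f : ℕ → V} (h : IPF G k f) (hk : k' ≤ k) : IPF G k' f :=
  ⟨fun i j hi hj => h.1 i j (by omega) (by omega),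
   fun i j hi hj => h.2 i j (by omega) (by omega)⟩

lemma IPF_shift_up {m : ℕ} {p : ℕ → V} (hp : IPF G m p) (c L : ℕ) (h : c + L ≤ m) :
    IPF G L (fun s => p (c + s)) := by
  constructor
  · intro i j hi hj hij
    have := hp.1 (c+i) (c+j) (by omega) (by omega) hij
    omega
  · intro i j hi hj
    rw [hp.2 (c+i) (c+j) (by omega) (by omega)]
    omega

lemma IPF_shift_down {m : ℕ} {p : ℕ → V} (hp : IPF G m p) (c : ℕ) (h : c < m) :
    IPF G (c+1) (fun s => p (c - s)) := by
  constructor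
  · intro i j hi hj hij
    have := hp.1 (c-i) (c-j) (by omega) (by omega) hij
    omega
  · intro i j hi hj
    rw [hp.2 (c-i) (c-j) (by omega) (by omega)]
    omega

lemma chain_dist (hconn : G.Connected) {k : ℕ} {f : ℕ → V} (hc : ∀ i, i + 1 < k → G.Adj (f i) (f (i+1))) :
    ∀ j, j < k → ∀ i, i ≤ j → G.dist (f i) (f j) ≤ j - i := by
  intro j
  induction j with
  | zero =>
    intro hj i hi
    have : i = 0 := by omega
    subst this
    simp [SimpleGraph.dist_self]
  | succ j ih =>
    intro hj i hi
    rcases Nat.eq_or_lt_of_le hi with he | hlt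
    · subst he
      simp [SimpleGraph.dist_self]
    · have h1 : G.dist (f i) (f j) ≤ j - i := ih (by omega) i (by omega)
      have h2 : G.dist (f j) (f (j+1)) = 1 :=
        SimpleGraph.dist_eq_one_iff_adj.mpr (hc j hj)
      have h3 : G.dist (f i) (f (j+1)) ≤ G.dist (f i) (f j) + G.dist (f j) (f (j+1)) := hconn.dist_triangle
      omega

lemma glue_IPF {t L : ℕ} {q r : ℕ → V} (ht : 1 ≤ t)
    (hq : IPF G t q) (hr : IPF G L r)
    (hadj : 1 ≤ L → G.Adj (q (t-1)) (r 0))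
    (hb : ∀ i, i + 1 < t → ∀ s, s < L → ¬ G.Adj (q i) (r s))
    (hc : ∀ s, 1 ≤ s → s < L → ¬ G.Adj (q (t-1)) (r s))
    (hd : ∀ i, i < t → ∀ s, s < L → q i ≠ r s) :
    IPF G (t + L) (fun i => if i < t then q i else r (i - t)) := by
  have main : ∀ i j, i < t + L → j < t + L → i ≤ j →
      (G.Adj ((fun i => if i < t then q i else r (i - t)) i)
        ((fun i => if i < t then q i else r (i - t)) j) ↔ (i + 1 = j ∨ j + 1 = i)) := by
    intro i j hi hj hij
    simp only
    rcases Nat.lt_or_ge i t with hit | hit <;> rcases Nat.lt_or_ge j t with hjt | hjt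
    · rw [if_pos hit, if_pos hjt]
      exact hq.2 i j hit hjt
    · rw [if_pos hit, if_neg (by omega)]
      rcases Nat.lt_or_ge (i+1) t with hi1 | hi1
      · constructor
        · intro h
          exact absurd h (hb i hi1 (j - t) (by omega))
        · intro h
          omega
      · have hieq : i = t - 1 := by omega
        rcases Nat.eq_or_lt_of_le hjt with hj0 | hj1
        · have : j - t = 0 := by omega
          rw [this, hieq]
          constructor
          · intro _
            omega
          · intro _
            exact hadj (by omega)
        · constructor
          · intro h
            rw [hieq] at h
            exact absurd h (hc (j - t) (by omega) (by omega))
          · intro h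
            omega
    · omega
    · rw [if_neg (by omega), if_neg (by omega)]
      rw [hr.2 (i-t) (j-t) (by omega) (by omega)]
      omega
  constructor
  · intro i j hi hj hij
    simp only at hij
    rcases Nat.lt_or_ge i t with hit | hit <;> rcases Nat.lt_or_ge j t with hjt | hjt
    · rw [if_pos hit, if_pos hjt] at hij
      exact hq.1 i j hit hjt hij
    · rw [if_pos hit, if_neg (by omega)] at hij
      exact absurd hij (hd i hit (j-t) (by omega))
    · rw [if_neg (by omega), if_pos hjt] at hij
      exact absurd hij.symm (hd j hjt (i-t) (by omega))
    · rw [if_neg (by omega), if_neg (by omega)] at hij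
      have := hr.1 (i-t) (j-t) (by omega) (by omega) hij
      omega
  · intro i j hi hj
    rcases Nat.le_total i j with h | h
    · exact main i j hi hj h
    · rw [G.adj_comm]
      rw [main j i hj hi h]
      omega

lemma geodesic_IPF (hconn : G.Connected) (u v : V) :
    ∃ q : ℕ → V, q 0 = u ∧ q (G.dist u v) = v ∧
      (∀ i, i ≤ G.dist u v → G.dist u (q i) = i) ∧
      (∀ i, i ≤ G.dist u v → G.dist (q i) v = G.dist u v - i) ∧
      (∀ i, i + 1 ≤ G.dist u v → G.Adj (q i) (q (i+1))) ∧
      IPF G (G.dist u v + 1) q := by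
  obtain ⟨q, h0, h1, h2, h3, h4⟩ := geodesic_props hconn u v
  refine ⟨q, h0, h1, h2, h3, h4, ?_, ?_⟩
  · intro i j hi hj hij
    have e1 := h2 i (by omega)
    have e2 := h2 j (by omega)
    rw [hij] at e1
    omega
  · intro i j hi hj
    constructor
    · intro h
      have := geodesic_adj_iff hconn h2 i j (by omega) (by omega) h
      omega
    · intro h
      rcases h with h | h
      · have := h4 i (by omega)
        rwa [h] at this
      · have := h4 j (by omega)
        rw [h] at this
        exact this.symm
end Aux

namespace Aux
open SimpleGraph Finset

lemma attach_near_ends {V : Type} {G : SimpleGraph V} {n : ℕ} (hn : 4 ≤ n)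
    (hstar : ¬ HasInducedCopy G (_root_.starGraph n))
    (hf1 : ¬ HasInducedCopy G (F1 n)) (hf2 : ¬ HasInducedCopy G (F2 n))
    (hf4 : ¬ HasInducedCopy G (F4 n)) (hf5 : ¬ HasInducedCopy G (F5 n))
    {m : ℕ} {p : ℕ → V} (hp : IPF G m p) {u : V} (hu : ∀ k, k < m → u ≠ p k)
    {k0 : ℕ} (hk0 : k0 < m) (hadj0 : G.Adj u (p k0)) :
    k0 < (2*n-1)*(n+2) ∨ m ≤ k0 + (2*n-1)*(n+2) + 1 := by
  classical
  by_contra hcon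
  push_neg at hcon
  obtain ⟨hL, hR⟩ := hcon
  set S := (Finset.range m).filter (fun k => G.Adj u (p k)) with hSdef
  have hSmem : ∀ k, k ∈ S ↔ (k < m ∧ G.Adj u (p k)) := by
    intro k; rw [hSdef, mem_filter, mem_range]
  have hScard : S.card ≤ 2*n - 2 := S_card_le hn hstar hp hu S (fun k hk => (hSmem k).mp hk)
  have hk0S : k0 ∈ S := (hSmem k0).mpr ⟨hk0, hadj0⟩
  obtain ⟨A, -, hA2, hA3⟩ := pigeongap (n := n) (base := 0) (by omega) hScard
  have hm2 : (2*n-1)*(n+2) + ((2*n-1)*(n+2) + 1) ≤ m := by omega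
  obtain ⟨Bs, hB1, hB2, hB3⟩ := pigeongap (n := n) (base := m - (2*n-1)*(n+2)) (by omega) hScard
  have hBm : Bs + (n+2) ≤ m := by omega
  set MID := S.filter (fun k => A + (n+2) ≤ k ∧ k < Bs) with hMIDdef
  have hMIDmem : ∀ k, k ∈ MID ↔ (k ∈ S ∧ A + (n+2) ≤ k ∧ k < Bs) := by
    intro k; rw [hMIDdef, mem_filter]
  have hk0MID : k0 ∈ MID := (hMIDmem k0).mpr ⟨hk0S, by omega, by omega⟩
  have hMne : MID.Nonempty := ⟨k0, hk0MID⟩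
  set a := MID.min' hMne with hadef
  set b := MID.max' hMne with hbdef
  have haMID : a ∈ MID := MID.min'_mem hMne
  have hbMID : b ∈ MID := MID.max'_mem hMne
  have hamin : ∀ k ∈ MID, a ≤ k := fun k hk => MID.min'_le k hk
  have hbmax : ∀ k ∈ MID, k ≤ b := fun k hk => MID.le_max' k hk
  obtain ⟨haS, haA, haB⟩ := (hMIDmem a).mp haMID
  obtain ⟨hbS, hbA, hbB⟩ := (hMIDmem b).mp hbMID
  have hab : a ≤ b := hamin b hbMID
  obtain ⟨ham, hadja⟩ := (hSmem a).mp haS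
  obtain ⟨hbm, hadjb⟩ := (hSmem b).mp hbS
  have han : n + 2 ≤ a := by omega
  have hbm2 : b + (n+2) ≤ m := by omega
  have clean_below : ∀ k, k ∈ S → k < a → k + (n+2) ≤ a := by
    intro k hk hka
    by_cases h1 : A + (n+2) ≤ k
    · exact absurd (hamin k ((hMIDmem k).mpr ⟨hk, h1, by omega⟩)) (by omega)
    · have := hA3 k hk
      omega
  have clean_above : ∀ k, k ∈ S → b < k → b + (n+2) ≤ k := by
    intro k hk hbk
    by_cases h1 : k < Bs
    · exact absurd (hbmax k ((hMIDmem k).mpr ⟨hk, by omega, h1⟩)) (by omega)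
    · have := hB3 k hk
      omega
  have hnadj : ∀ k, k < m → k ∉ S → ¬ G.Adj u (p k) :=
    fun k hkm hk hadj => hk ((hSmem k).mpr ⟨hkm, hadj⟩)
  have hnadj_below : ∀ k, k < a → a ≤ k + n + 1 → ¬ G.Adj u (p k) := by
    intro k h1 h2
    refine hnadj k (by omega) (fun hk => ?_)
    have := clean_below k hk h1
    omega
  have hnadj_above : ∀ k, b < k → k ≤ b + n + 1 → ¬ G.Adj u (p k) := by
    intro k h1 h2
    refine hnadj k (by omega) (fun hk => ?_)
    have := clean_above k hk h1
    omega
  have hpNe : ∀ i j, i < m → j < m → i ≠ j → p i ≠ p j :=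
    fun i j hi hj hij e => hij (hp.1 i j hi hj e)
  clear_value a b
  by_cases hcase : ∃ e ∈ MID, a + 2 ≤ e ∧ e + 2 ≤ b
  · -- Case 1 : F1 with x1 = u, x2 = p e
    obtain ⟨e, heMID, he1, he2⟩ := hcase
    obtain ⟨heS, -, -⟩ := (hMIDmem e).mp heMID
    obtain ⟨hem, hadje⟩ := (hSmem e).mp heS
    refine hf1 (hasF1 (G := G) u (p e) (fun i => p (a - i)) (fun i => p (b + i))
      ?_ ?_ ?_ ?_ ?_ ?_ ?_ ?_ ?_ ?_ ?_ ?_ ?_ ?_ ?_ ?_ ?_ ?_ ?_ ?_)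
    · intro i j hi hj hij
      have := hp.1 (a-i) (a-j) (by omega) (by omega) hij; omega
    · intro i j hi hj hij
      have := hp.1 (b+i) (b+j) (by omega) (by omega) hij; omega
    · intro i j hi hj
      exact hpNe (a-i) (b+j) (by omega) (by omega) (by omega)
    · intro i hi; exact hu _ (by omega)
    · intro i hi; exact hu _ (by omega)
    · intro i hi; exact hpNe e (a-i) (by omega) (by omega) (by omega)
    · intro i hi; exact hpNe e (b+i) (by omega) (by omega) (by omega)
    · exact hu _ hem
    · exact hadje
    · intro _; simpa using hadja
    · intro _; simpa using hadjb
    · intro i hi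
      exact (hp.2 (a-i) (a-(i+1)) (by omega) (by omega)).mpr (by omega)
    · intro i hi
      exact (hp.2 (b+i) (b+(i+1)) (by omega) (by omega)).mpr (by omega)
    · intro i j hi hj hnc hadj
      have := (hp.2 (a-i) (a-j) (by omega) (by omega)).mp hadj; omega
    · intro i j hi hj hnc hadj
      have := (hp.2 (b+i) (b+j) (by omega) (by omega)).mp hadj; omega
    · intro i j hi hj hadj
      have := (hp.2 (a-i) (b+j) (by omega) (by omega)).mp hadj; omega
    · intro i h0 hi
      exact hnadj_below (a-i) (by omega) (by omega)
    · intro i h0 hi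
      exact hnadj_above (b+i) (by omega) (by omega)
    · intro i hi hadj
      have := (hp.2 e (a-i) (by omega) (by omega)).mp hadj; omega
    · intro i hi hadj
      have := (hp.2 e (b+i) (by omega) (by omega)).mp hadj; omega
  · push_neg at hcase
    -- MID ⊆ {a, a+1, b-1, b}
    rcases Nat.lt_or_ge b (a+1) with hba | hba1
    · -- b = a : F1 with x1 = p a, x2 = u
      have hbeq : b = a := by omega
      subst hbeq
      refine hf1 (hasF1 (G := G) (p b) u (fun i => p (b - 1 - i)) (fun i => p (b + 1 + i))
        ?_ ?_ ?_ ?_ ?_ ?_ ?_ ?_ ?_ ?_ ?_ ?_ ?_ ?_ ?_ ?_ ?_ ?_ ?_ ?_)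
      · intro i j hi hj hij
        have := hp.1 (b-1-i) (b-1-j) (by omega) (by omega) hij; omega
      · intro i j hi hj hij
        have := hp.1 (b+1+i) (b+1+j) (by omega) (by omega) hij; omega
      · intro i j hi hj
        exact hpNe (b-1-i) (b+1+j) (by omega) (by omega) (by omega)
      · intro i hi; exact hpNe b (b-1-i) (by omega) (by omega) (by omega)
      · intro i hi; exact hpNe b (b+1+i) (by omega) (by omega) (by omega)
      · intro i hi; exact hu _ (by omega)
      · intro i hi; exact hu _ (by omega)
      · exact (hu b hbm).symm
      · exact hadjb.symm
      · intro _
        simpa using (hp.2 b (b-1) (by omega) (by omega)).mpr (by omega)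
      · intro _
        simpa using (hp.2 b (b+1) (by omega) (by omega)).mpr (by omega)
      · intro i hi
        exact (hp.2 (b-1-i) (b-1-(i+1)) (by omega) (by omega)).mpr (by omega)
      · intro i hi
        exact (hp.2 (b+1+i) (b+1+(i+1)) (by omega) (by omega)).mpr (by omega)
      · intro i j hi hj hnc hadj
        have := (hp.2 (b-1-i) (b-1-j) (by omega) (by omega)).mp hadj; omega
      · intro i j hi hj hnc hadj
        have := (hp.2 (b+1+i) (b+1+j) (by omega) (by omega)).mp hadj; omega
      · intro i j hi hj hadj
        have := (hp.2 (b-1-i) (b+1+j) (by omega) (by omega)).mp hadj; omega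
      · intro i h0 hi hadj
        have := (hp.2 b (b-1-i) (by omega) (by omega)).mp hadj; omega
      · intro i h0 hi hadj
        have := (hp.2 b (b+1+i) (by omega) (by omega)).mp hadj; omega
      · intro i hi
        exact hnadj_below (b-1-i) (by omega) (by omega)
      · intro i hi
        exact hnadj_above (b+1+i) (by omega) (by omega)
    · rcases Nat.lt_or_ge b (a+2) with hba | hba2
      · -- b = a+1 : F2 with x1 = u
        have hbeq : b = a + 1 := by omega
        refine hf2 (hasF2 (G := G) u (fun i => p (a - i)) (fun i => p (b + i))
          ?_ ?_ ?_ ?_ ?_ ?_ ?_ ?_ ?_ ?_ ?_ ?_ ?_ ?_ ?_)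
        · intro i j hi hj hij
          have := hp.1 (a-i) (a-j) (by omega) (by omega) hij; omega
        · intro i j hi hj hij
          have := hp.1 (b+i) (b+j) (by omega) (by omega) hij; omega
        · intro i j hi hj
          exact hpNe (a-i) (b+j) (by omega) (by omega) (by omega)
        · intro i hi; exact hu _ (by omega)
        · intro i hi; exact hu _ (by omega)
        · intro _; simpa using hadja
        · intro _; simpa using hadjb
        · intro _
          simpa using (hp.2 a b (by omega) (by omega)).mpr (by omega)
        · intro i hi
          exact (hp.2 (a-i) (a-(i+1)) (by omega) (by omega)).mpr (by omega)
        · intro i hi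
          exact (hp.2 (b+i) (b+(i+1)) (by omega) (by omega)).mpr (by omega)
        · intro i j hi hj hnc hadj
          have := (hp.2 (a-i) (a-j) (by omega) (by omega)).mp hadj; omega
        · intro i j hi hj hnc hadj
          have := (hp.2 (b+i) (b+j) (by omega) (by omega)).mp hadj; omega
        · intro i j hi hj hnc hadj
          have := (hp.2 (a-i) (b+j) (by omega) (by omega)).mp hadj; omega
        · intro i h0 hi
          exact hnadj_below (a-i) (by omega) (by omega)
        · intro i h0 hi
          exact hnadj_above (b+i) (by omega) (by omega)
      · rcases Nat.lt_or_ge b (a+3) with hba | hba3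
        · -- b = a+2 : F4 / F5
          have hbeq : b = a + 2 := by omega
          by_cases hmidS : G.Adj u (p (a+1))
          · refine hf5 ?_
            have key : HasInducedCopy G (if true then F5 n else F4 n) := by
              refine hasF45 (G := G) u (p (a+1)) (fun i => p (a - i)) (fun i => p (b + i)) true
                ?_ ?_ ?_ ?_ ?_ ?_ ?_ ?_ ?_ ?_ ?_ ?_ ?_ ?_ ?_ ?_ ?_ ?_ ?_ ?_ ?_ ?_
              · intro i j hi hj hij
                have := hp.1 (a-i) (a-j) (by omega) (by omega) hij; omega
              · intro i j hi hj hij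
                have := hp.1 (b+i) (b+j) (by omega) (by omega) hij; omega
              · intro i j hi hj
                exact hpNe (a-i) (b+j) (by omega) (by omega) (by omega)
              · intro i hi; exact hu _ (by omega)
              · intro i hi; exact hu _ (by omega)
              · intro i hi; exact hpNe (a+1) (a-i) (by omega) (by omega) (by omega)
              · intro i hi; exact hpNe (a+1) (b+i) (by omega) (by omega) (by omega)
              · exact hu _ (by omega)
              · simp [hmidS]
              · intro _; simpa using hadja
              · intro _; simpa using hadjb
              · intro _
                simpa using (hp.2 (a+1) a (by omega) (by omega)).mpr (by omega)
              · intro _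
                simpa using (hp.2 (a+1) b (by omega) (by omega)).mpr (by omega)
              · intro i hi
                exact (hp.2 (a-i) (a-(i+1)) (by omega) (by omega)).mpr (by omega)
              · intro i hi
                exact (hp.2 (b+i) (b+(i+1)) (by omega) (by omega)).mpr (by omega)
              · intro i j hi hj hnc hadj
                have := (hp.2 (a-i) (a-j) (by omega) (by omega)).mp hadj; omega
              · intro i j hi hj hnc hadj
                have := (hp.2 (b+i) (b+j) (by omega) (by omega)).mp hadj; omega
              · intro i j hi hj hadj
                have := (hp.2 (a-i) (b+j) (by omega) (by omega)).mp hadj; omega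
              · intro i h0 hi
                exact hnadj_below (a-i) (by omega) (by omega)
              · intro i h0 hi
                exact hnadj_above (b+i) (by omega) (by omega)
              · intro i h0 hi hadj
                have := (hp.2 (a+1) (a-i) (by omega) (by omega)).mp hadj; omega
              · intro i h0 hi hadj
                have := (hp.2 (a+1) (b+i) (by omega) (by omega)).mp hadj; omega
            simpa using key
          · refine hf4 ?_
            have key : HasInducedCopy G (if false then F5 n else F4 n) := by
              refine hasF45 (G := G) u (p (a+1)) (fun i => p (a - i)) (fun i => p (b + i)) false
                ?_ ?_ ?_ ?_ ?_ ?_ ?_ ?_ ?_ ?_ ?_ ?_ ?_ ?_ ?_ ?_ ?_ ?_ ?_ ?_ ?_ ?_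
              · intro i j hi hj hij
                have := hp.1 (a-i) (a-j) (by omega) (by omega) hij; omega
              · intro i j hi hj hij
                have := hp.1 (b+i) (b+j) (by omega) (by omega) hij; omega
              · intro i j hi hj
                exact hpNe (a-i) (b+j) (by omega) (by omega) (by omega)
              · intro i hi; exact hu _ (by omega)
              · intro i hi; exact hu _ (by omega)
              · intro i hi; exact hpNe (a+1) (a-i) (by omega) (by omega) (by omega)
              · intro i hi; exact hpNe (a+1) (b+i) (by omega) (by omega) (by omega)
              · exact hu _ (by omega)
              · simp [hmidS]
              · intro _; simpa using hadja
              · intro _; simpa using hadjb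
              · intro _
                simpa using (hp.2 (a+1) a (by omega) (by omega)).mpr (by omega)
              · intro _
                simpa using (hp.2 (a+1) b (by omega) (by omega)).mpr (by omega)
              · intro i hi
                exact (hp.2 (a-i) (a-(i+1)) (by omega) (by omega)).mpr (by omega)
              · intro i hi
                exact (hp.2 (b+i) (b+(i+1)) (by omega) (by omega)).mpr (by omega)
              · intro i j hi hj hnc hadj
                have := (hp.2 (a-i) (a-j) (by omega) (by omega)).mp hadj; omega
              · intro i j hi hj hnc hadj
                have := (hp.2 (b+i) (b+j) (by omega) (by omega)).mp hadj; omega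
              · intro i j hi hj hadj
                have := (hp.2 (a-i) (b+j) (by omega) (by omega)).mp hadj; omega
              · intro i h0 hi
                exact hnadj_below (a-i) (by omega) (by omega)
              · intro i h0 hi
                exact hnadj_above (b+i) (by omega) (by omega)
              · intro i h0 hi hadj
                have := (hp.2 (a+1) (a-i) (by omega) (by omega)).mp hadj; omega
              · intro i h0 hi hadj
                have := (hp.2 (a+1) (b+i) (by omega) (by omega)).mp hadj; omega
            simpa using key
        · -- b ≥ a+3
          by_cases ha1 : G.Adj u (p (a+1))
          · -- F2 with x1 = p (a+1)
            set z : ℕ → V := fun i => if i = 0 then u else p (b + i - 1) with hzdef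
            have hz0 : z 0 = u := rfl
            have hzs : ∀ i, ¬ i = 0 → z i = p (b + i - 1) := fun i hi => if_neg hi
            refine hf2 (hasF2 (G := G) (p (a+1)) (fun i => p (a - i)) z
              ?_ ?_ ?_ ?_ ?_ ?_ ?_ ?_ ?_ ?_ ?_ ?_ ?_ ?_ ?_)
            · intro i j hi hj hij
              have := hp.1 (a-i) (a-j) (by omega) (by omega) hij; omega
            · intro i j hi hj hij
              by_cases hi0 : i = 0 <;> by_cases hj0 : j = 0
              · omega
              · rw [hi0, hz0, hzs j hj0] at hij
                exact absurd hij (hu _ (by omega))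
              · rw [hj0, hz0, hzs i hi0] at hij
                exact absurd hij.symm (hu _ (by omega))
              · rw [hzs i hi0, hzs j hj0] at hij
                have := hp.1 (b+i-1) (b+j-1) (by omega) (by omega) hij; omega
            · intro i j hi hj
              by_cases hj0 : j = 0
              · rw [hj0, hz0]
                exact fun h => hu _ (by omega) h.symm
              · rw [hzs j hj0]
                exact hpNe (a-i) (b+j-1) (by omega) (by omega) (by omega)
            · intro i hi
              exact hpNe (a+1) (a-i) (by omega) (by omega) (by omega)
            · intro i hi
              by_cases hi0 : i = 0
              · rw [hi0, hz0]
                exact fun h => hu _ (by omega) h.symm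
              · rw [hzs i hi0]
                exact hpNe (a+1) (b+i-1) (by omega) (by omega) (by omega)
            · intro _
              simpa using (hp.2 (a+1) a (by omega) (by omega)).mpr (by omega)
            · intro _
              rw [hz0]
              exact ha1.symm
            · intro _
              rw [hz0]
              simpa using hadja.symm
            · intro i hi
              exact (hp.2 (a-i) (a-(i+1)) (by omega) (by omega)).mpr (by omega)
            · intro i hi
              rw [hzs (i+1) (by omega)]
              by_cases hi0 : i = 0
              · rw [hi0, hz0]
                have : b + (0+1) - 1 = b := by omega
                rw [this]
                exact hadjb
              · rw [hzs i hi0]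
                exact (hp.2 (b+i-1) (b+(i+1)-1) (by omega) (by omega)).mpr (by omega)
            · intro i j hi hj hnc hadj
              have := (hp.2 (a-i) (a-j) (by omega) (by omega)).mp hadj; omega
            · intro i j hi hj hnc hadj
              by_cases hi0 : i = 0 <;> by_cases hj0 : j = 0
              · rw [hi0, hj0] at hadj
                exact G.irrefl hadj
              · rw [hi0, hz0, hzs j hj0] at hadj
                exact hnadj_above (b+j-1) (by omega) (by omega) hadj
              · rw [hj0, hz0, hzs i hi0] at hadj
                exact hnadj_above (b+i-1) (by omega) (by omega) hadj.symm
              · rw [hzs i hi0, hzs j hj0] at hadj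
                have := (hp.2 (b+i-1) (b+j-1) (by omega) (by omega)).mp hadj; omega
            · intro i j hi hj hnc hadj
              by_cases hj0 : j = 0
              · rw [hj0, hz0] at hadj
                exact hnadj_below (a-i) (by omega) (by omega) hadj.symm
              · rw [hzs j hj0] at hadj
                have := (hp.2 (a-i) (b+j-1) (by omega) (by omega)).mp hadj; omega
            · intro i h0 hi hadj
              have := (hp.2 (a+1) (a-i) (by omega) (by omega)).mp hadj; omega
            · intro i h0 hi hadj
              rw [hzs i (by omega)] at hadj
              have := (hp.2 (a+1) (b+i-1) (by omega) (by omega)).mp hadj; omega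
          · -- F1 with x1 = p a, x2 = p (a+1), z through u
            set z : ℕ → V := fun i => if i = 0 then u else p (b + i - 1) with hzdef
            have hz0 : z 0 = u := rfl
            have hzs : ∀ i, ¬ i = 0 → z i = p (b + i - 1) := fun i hi => if_neg hi
            refine hf1 (hasF1 (G := G) (p a) (p (a+1)) (fun i => p (a - 1 - i)) z
              ?_ ?_ ?_ ?_ ?_ ?_ ?_ ?_ ?_ ?_ ?_ ?_ ?_ ?_ ?_ ?_ ?_ ?_ ?_ ?_)
            · intro i j hi hj hij
              have := hp.1 (a-1-i) (a-1-j) (by omega) (by omega) hij; omega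
            · intro i j hi hj hij
              by_cases hi0 : i = 0 <;> by_cases hj0 : j = 0
              · omega
              · rw [hi0, hz0, hzs j hj0] at hij
                exact absurd hij (hu _ (by omega))
              · rw [hj0, hz0, hzs i hi0] at hij
                exact absurd hij.symm (hu _ (by omega))
              · rw [hzs i hi0, hzs j hj0] at hij
                have := hp.1 (b+i-1) (b+j-1) (by omega) (by omega) hij; omega
            · intro i j hi hj
              by_cases hj0 : j = 0
              · rw [hj0, hz0]
                exact fun h => hu _ (by omega) h.symm
              · rw [hzs j hj0]
                exact hpNe (a-1-i) (b+j-1) (by omega) (by omega) (by omega)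
            · intro i hi
              exact hpNe a (a-1-i) (by omega) (by omega) (by omega)
            · intro i hi
              by_cases hi0 : i = 0
              · rw [hi0, hz0]
                exact fun h => hu _ (by omega) h.symm
              · rw [hzs i hi0]
                exact hpNe a (b+i-1) (by omega) (by omega) (by omega)
            · intro i hi
              exact hpNe (a+1) (a-1-i) (by omega) (by omega) (by omega)
            · intro i hi
              by_cases hi0 : i = 0
              · rw [hi0, hz0]
                exact fun h => hu _ (by omega) h.symm
              · rw [hzs i hi0]
                exact hpNe (a+1) (b+i-1) (by omega) (by omega) (by omega)
            · exact hpNe a (a+1) (by omega) (by omega) (by omega)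
            · exact (hp.2 a (a+1) (by omega) (by omega)).mpr (by omega)
            · intro _
              simpa using (hp.2 a (a-1) (by omega) (by omega)).mpr (by omega)
            · intro _
              rw [hz0]
              exact hadja.symm
            · intro i hi
              exact (hp.2 (a-1-i) (a-1-(i+1)) (by omega) (by omega)).mpr (by omega)
            · intro i hi
              rw [hzs (i+1) (by omega)]
              by_cases hi0 : i = 0
              · rw [hi0, hz0]
                have : b + (0+1) - 1 = b := by omega
                rw [this]
                exact hadjb
              · rw [hzs i hi0]
                exact (hp.2 (b+i-1) (b+(i+1)-1) (by omega) (by omega)).mpr (by omega)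
            · intro i j hi hj hnc hadj
              have := (hp.2 (a-1-i) (a-1-j) (by omega) (by omega)).mp hadj; omega
            · intro i j hi hj hnc hadj
              by_cases hi0 : i = 0 <;> by_cases hj0 : j = 0
              · rw [hi0, hj0] at hadj
                exact G.irrefl hadj
              · rw [hi0, hz0, hzs j hj0] at hadj
                exact hnadj_above (b+j-1) (by omega) (by omega) hadj
              · rw [hj0, hz0, hzs i hi0] at hadj
                exact hnadj_above (b+i-1) (by omega) (by omega) hadj.symm
              · rw [hzs i hi0, hzs j hj0] at hadj
                have := (hp.2 (b+i-1) (b+j-1) (by omega) (by omega)).mp hadj; omega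
            · intro i j hi hj hadj
              by_cases hj0 : j = 0
              · rw [hj0, hz0] at hadj
                exact hnadj_below (a-1-i) (by omega) (by omega) hadj.symm
              · rw [hzs j hj0] at hadj
                have := (hp.2 (a-1-i) (b+j-1) (by omega) (by omega)).mp hadj; omega
            · intro i h0 hi hadj
              have := (hp.2 a (a-1-i) (by omega) (by omega)).mp hadj; omega
            · intro i h0 hi hadj
              rw [hzs i (by omega)] at hadj
              have := (hp.2 a (b+i-1) (by omega) (by omega)).mp hadj; omega
            · intro i hi hadj
              have := (hp.2 (a+1) (a-1-i) (by omega) (by omega)).mp hadj; omega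
            · intro i hi hadj
              by_cases hi0 : i = 0
              · rw [hi0, hz0] at hadj
                exact ha1 hadj.symm
              · rw [hzs i hi0] at hadj
                have := (hp.2 (a+1) (b+i-1) (by omega) (by omega)).mp hadj; omega
end Aux

namespace Aux
open SimpleGraph Finset

lemma claimB {V : Type} [Fintype V] {G : SimpleGraph V} {n : ℕ} (hn : 4 ≤ n)
    (hconn : G.Connected)
    (hstar : ¬ HasInducedCopy G (_root_.starGraph n))
    (hf1 : ¬ HasInducedCopy G (F1 n)) (hf2 : ¬ HasInducedCopy G (F2 n))
    (hf4 : ¬ HasInducedCopy G (F4 n)) (hf5 : ¬ HasInducedCopy G (F5 n))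
    {m : ℕ} {p : ℕ → V} (hp : IPF G m p) (hm1 : 1 ≤ m)
    (hmax : ∀ k g, IPF G k g → k ≤ m) (v : V) :
    (∃ k, k < m ∧ v = p k) ∨ G.dist (p 0) v ≤ 5*((2*n-1)*(n+2)) + 5*n + 25 ∨
      G.dist (p (m-1)) v ≤ 5*((2*n-1)*(n+2)) + 5*n + 25 := by
  classical
  set C1 := (2*n-1)*(n+2) with hC1
  have hC1n : n + 2 ≤ C1 := by
    have h : 1*(n+2) ≤ (2*n-1)*(n+2) := Nat.mul_le_mul_right _ (by omega)
    omega
  set ρ := 5*C1 + 5*n + 25 with hρ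
  have eccb : ∀ w : V, G.dist (p 0) w ≤ m - 1 := by
    intro w
    obtain ⟨q, -, -, -, -, -, hq⟩ := geodesic_IPF hconn (p 0) w
    have := hmax _ _ hq
    omega
  by_cases hsmall : m ≤ ρ + 1
  · right; left
    have := eccb v
    omega
  push_neg at hsmall
  set T := (Finset.range m).image (fun k => G.dist v (p k)) with hT
  have hTne : T.Nonempty :=
    ⟨G.dist v (p 0), Finset.mem_image.mpr ⟨0, Finset.mem_range.mpr (by omega), rfl⟩⟩
  set t := T.min' hTne with ht
  have htmem := T.min'_mem hTne
  obtain ⟨ks, hksm', hks⟩ := Finset.mem_image.mp htmem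
  rw [Finset.mem_range] at hksm'
  have htmin : ∀ k, k < m → t ≤ G.dist v (p k) := by
    intro k hk
    exact T.min'_le _ (Finset.mem_image.mpr ⟨k, Finset.mem_range.mpr hk, rfl⟩)
  have hdv : G.dist v (p ks) = t := hks
  rcases Nat.eq_zero_or_pos t with ht0 | htpos
  · left
    refine ⟨ks, hksm', ?_⟩
    exact (hconn.dist_eq_zero_iff).mp (by omega)
  obtain ⟨q, hq0, hqt, hqd1, hqd2, hqchain, hqIPF⟩ := geodesic_IPF hconn v (p ks)
  rw [hdv] at hqt hqIPF
  have hqd1' : ∀ i, i ≤ t → G.dist v (q i) = i := fun i hi => hqd1 i (by omega)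
  have hqchain' : ∀ i, i + 1 ≤ t → G.Adj (q i) (q (i+1)) := fun i hi => hqchain i (by omega)
  have hqnotp : ∀ i, i < t → ∀ k, k < m → q i ≠ p k := by
    intro i hi k hk he
    have h1 : G.dist v (q i) = i := hqd1' i (by omega)
    have h2 := htmin k hk
    rw [he] at h1
    omega
  have hqnadj : ∀ i, i + 1 < t → ∀ k, k < m → ¬ G.Adj (q i) (p k) := by
    intro i hi k hk hadj
    have h1 : G.dist v (q i) = i := hqd1' i (by omega)
    have htr : G.dist v (p k) ≤ G.dist v (q i) + G.dist (q i) (p k) := hconn.dist_triangle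
    have h3 : G.dist (q i) (p k) = 1 := SimpleGraph.dist_eq_one_iff_adj.mpr hadj
    have := htmin k hk
    omega
  set u := q (t-1) with hudef
  have hum : ∀ k, k < m → u ≠ p k := fun k hk => hqnotp (t-1) (by omega) k hk
  have huadj : G.Adj u (p ks) := by
    have h := hqchain' (t-1) (by omega)
    rw [show t - 1 + 1 = t by omega, hqt] at h
    exact h
  have hduv : G.dist v u = t - 1 := hqd1' (t-1) (by omega)
  set Su := (Finset.range m).filter (fun k => G.Adj u (p k)) with hSu
  have hSumem : ∀ k, k ∈ Su ↔ (k < m ∧ G.Adj u (p k)) := by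
    intro k
    rw [hSu, mem_filter, mem_range]
  have hksSu : ks ∈ Su := (hSumem ks).mpr ⟨hksm', huadj⟩
  have hattach : ∀ k ∈ Su, k < C1 ∨ m ≤ k + C1 + 1 := by
    intro k hk
    obtain ⟨hkm, hka⟩ := (hSumem k).mp hk
    exact attach_near_ends hn hstar hf1 hf2 hf4 hf5 hp hum hkm hka
  have hpchain : ∀ i, i + 1 < m → G.Adj (p i) (p (i+1)) :=
    fun i hi => (hp.2 i (i+1) (by omega) (by omega)).mpr (by omega)
  have hpNe : ∀ i j, i < m → j < m → i ≠ j → p i ≠ p j :=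
    fun i j hi hj hij e => hij (hp.1 i j hi hj e)
  by_cases hLow : ∀ k ∈ Su, k < C1
  · right; left
    set jm := Su.max' ⟨ks, hksSu⟩ with hjm
    have hjmSu := Su.max'_mem (H := ⟨ks, hksSu⟩)
    have hjmmax : ∀ k ∈ Su, k ≤ jm := fun k hk => Su.le_max' k hk
    have hjmC : jm < C1 := hLow _ hjmSu
    obtain ⟨hjmm, hjmadj⟩ := (hSumem jm).mp hjmSu
    have hglue := glue_IPF (G := G) (t := t) (L := m - jm) (q := q)
      (r := fun s => p (jm + s)) htpos
      (IPF_mono hqIPF (by omega))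
      (IPF_shift_up hp jm (m - jm) (by omega))
      (fun _ => by simpa using hjmadj)
      (fun i hi s hs hadj => hqnadj i (by omega) (jm+s) (by omega) hadj)
      (fun s hs1 hs2 hadj => by
        have hmem : jm + s ∈ Su := (hSumem _).mpr ⟨by omega, hadj⟩
        have := hjmmax _ hmem
        omega)
      (fun i hi s hs => hqnotp i (by omega) (jm+s) (by omega))
    have hle := hmax _ _ hglue
    have htjm : t ≤ jm := by omega
    have hd1 : G.dist (p 0) (p jm) ≤ jm := by
      have := chain_dist hconn hpchain jm hjmm 0 (by omega)
      simpa using this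
    have hd2 : G.dist (p jm) u = 1 := SimpleGraph.dist_eq_one_iff_adj.mpr hjmadj.symm
    have htr1 : G.dist (p 0) v ≤ G.dist (p 0) (p jm) + G.dist (p jm) v := hconn.dist_triangle
    have htr2 : G.dist (p jm) v ≤ G.dist (p jm) u + G.dist u v := hconn.dist_triangle
    have hcomm : G.dist u v = G.dist v u := SimpleGraph.dist_comm ..
    omega
  by_cases hHigh : ∀ k ∈ Su, m ≤ k + C1 + 1
  · right; right
    set im := Su.min' ⟨ks, hksSu⟩ with him
    have himSu := Su.min'_mem (H := ⟨ks, hksSu⟩)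
    have himmin : ∀ k ∈ Su, im ≤ k := fun k hk => Su.min'_le k hk
    have himC : m ≤ im + C1 + 1 := hHigh _ himSu
    obtain ⟨himm, himadj⟩ := (hSumem im).mp himSu
    have hglue := glue_IPF (G := G) (t := t) (L := im + 1) (q := q)
      (r := fun s => p (im - s)) htpos
      (IPF_mono hqIPF (by omega))
      (IPF_shift_down hp im (by omega))
      (fun _ => by simpa using himadj)
      (fun i hi s hs hadj => hqnadj i (by omega) (im - s) (by omega) hadj)
      (fun s hs1 hs2 hadj => by
        have hmem : im - s ∈ Su := (hSumem _).mpr ⟨by omega, hadj⟩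
        have := himmin _ hmem
        omega)
      (fun i hi s hs => hqnotp i (by omega) (im - s) (by omega))
    have hle := hmax _ _ hglue
    have htim : t + im + 1 ≤ m := by omega
    have hd1 : G.dist (p im) (p (m-1)) ≤ m - 1 - im := by
      have := chain_dist hconn hpchain (m-1) (by omega) im (by omega)
      simpa using this
    have hd1' : G.dist (p (m-1)) (p im) = G.dist (p im) (p (m-1)) := SimpleGraph.dist_comm ..
    have hd2 : G.dist (p im) u = 1 := SimpleGraph.dist_eq_one_iff_adj.mpr himadj.symm
    have htr1 : G.dist (p (m-1)) v ≤ G.dist (p (m-1)) (p im) + G.dist (p im) v :=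
      hconn.dist_triangle
    have htr2 : G.dist (p im) v ≤ G.dist (p im) u + G.dist u v := hconn.dist_triangle
    have hcomm : G.dist u v = G.dist v u := SimpleGraph.dist_comm ..
    omega
  push_neg at hLow hHigh
  obtain ⟨kh, hkhSu, hkh⟩ := hLow
  obtain ⟨kl, hklSu, hkl⟩ := hHigh
  have hkhHigh : m ≤ kh + C1 + 1 := (hattach kh hkhSu).resolve_left (by omega)
  have hklLow : kl < C1 := (hattach kl hklSu).resolve_right (by omega)
  rcases Nat.lt_or_ge t 2 with ht1 | ht2
  · right; left
    have hvu : v = u := by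
      rw [hudef, show t - 1 = 0 by omega, hq0]
    obtain ⟨hklm, hkladj⟩ := (hSumem kl).mp hklSu
    have hd1 : G.dist (p 0) (p kl) ≤ kl := by
      have := chain_dist hconn hpchain kl hklm 0 (by omega)
      simpa using this
    have hd2 : G.dist (p kl) v = 1 := by
      rw [hvu]
      exact SimpleGraph.dist_eq_one_iff_adj.mpr hkladj.symm
    have htr : G.dist (p 0) v ≤ G.dist (p 0) (p kl) + G.dist (p kl) v := hconn.dist_triangle
    omega
  · exfalso
    set Sl := Su.filter (fun k => k < C1) with hSl
    set Sh := Su.filter (fun k => ¬ k < C1) with hSh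
    have hklSl : kl ∈ Sl := mem_filter.mpr ⟨hklSu, hklLow⟩
    have hkhSh : kh ∈ Sh := mem_filter.mpr ⟨hkhSu, by omega⟩
    set al := Sl.max' ⟨kl, hklSl⟩ with hal
    set bh := Sh.min' ⟨kh, hkhSh⟩ with hbh
    have halSl := Sl.max'_mem (H := ⟨kl, hklSl⟩)
    have hbhSh := Sh.min'_mem (H := ⟨kh, hkhSh⟩)
    obtain ⟨halSu, halC⟩ := mem_filter.mp halSl
    obtain ⟨hbhSu, hbhC⟩ := mem_filter.mp hbhSh
    have hbhHigh : m ≤ bh + C1 + 1 := (hattach bh hbhSu).resolve_left hbhC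
    obtain ⟨halm, haladj⟩ := (hSumem al).mp halSu
    obtain ⟨hbhm, hbhadj⟩ := (hSumem bh).mp hbhSu
    have hgap : al + 2*n + 2 < bh := by omega
    have halmax : ∀ k ∈ Su, k < C1 → k ≤ al :=
      fun k hk hkC => Sl.le_max' k (mem_filter.mpr ⟨hk, hkC⟩)
    have hbhmin : ∀ k ∈ Su, ¬ k < C1 → bh ≤ k :=
      fun k hk hkC => Sh.min'_le k (mem_filter.mpr ⟨hk, hkC⟩)
    refine hf1 (hasF1 (G := G) u (q (t-2)) (fun i => p (al + i)) (fun i => p (bh - i))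
      ?_ ?_ ?_ ?_ ?_ ?_ ?_ ?_ ?_ ?_ ?_ ?_ ?_ ?_ ?_ ?_ ?_ ?_ ?_ ?_)
    · intro i j hi hj hij
      have := hp.1 (al+i) (al+j) (by omega) (by omega) hij; omega
    · intro i j hi hj hij
      have := hp.1 (bh-i) (bh-j) (by omega) (by omega) hij; omega
    · intro i j hi hj
      exact hpNe (al+i) (bh-j) (by omega) (by omega) (by omega)
    · intro i hi; exact hum _ (by omega)
    · intro i hi; exact hum _ (by omega)
    · intro i hi; exact hqnotp (t-2) (by omega) (al+i) (by omega)
    · intro i hi; exact hqnotp (t-2) (by omega) (bh-i) (by omega)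
    · intro e
      have := hqIPF.1 (t-1) (t-2) (by omega) (by omega) e
      omega
    · have h := hqchain' (t-2) (by omega)
      rw [show t - 2 + 1 = t - 1 by omega] at h
      exact h.symm
    · intro _; simpa using haladj
    · intro _; simpa using hbhadj
    · intro i hi
      exact (hp.2 (al+i) (al+(i+1)) (by omega) (by omega)).mpr (by omega)
    · intro i hi
      exact (hp.2 (bh-i) (bh-(i+1)) (by omega) (by omega)).mpr (by omega)
    · intro i j hi hj hnc hadj
      have := (hp.2 (al+i) (al+j) (by omega) (by omega)).mp hadj; omega
    · intro i j hi hj hnc hadj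
      have := (hp.2 (bh-i) (bh-j) (by omega) (by omega)).mp hadj; omega
    · intro i j hi hj hadj
      have := (hp.2 (al+i) (bh-j) (by omega) (by omega)).mp hadj; omega
    · intro i h0 hi hadj
      have hmem : al + i ∈ Su := (hSumem _).mpr ⟨by omega, hadj⟩
      rcases hattach _ hmem with h | h
      · have := halmax _ hmem h
        omega
      · omega
    · intro i h0 hi hadj
      have hmem : bh - i ∈ Su := (hSumem _).mpr ⟨by omega, hadj⟩
      by_cases hc : bh - i < C1
      · omega
      · have := hbhmin _ hmem hc
        omega
    · intro i hi
      exact hqnadj (t-2) (by omega) (al+i) (by omega)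
    · intro i hi
      exact hqnadj (t-2) (by omega) (bh-i) (by omega)
end Aux

namespace Aux
open SimpleGraph Finset

lemma IPF_isInducedPathSet {V : Type} {G : SimpleGraph V} {m : ℕ} {p : ℕ → V}
    (hp : IPF G m p) (hm : 1 ≤ m) :
    IsInducedPathSet G {x | ∃ k, k < m ∧ x = p k} := by
  classical
  refine ⟨m, hm, ⟨?_⟩⟩
  have hmem : ∀ x : ({x | ∃ k, k < m ∧ x = p k} : Set V), ∃ k, k < m ∧ (x : V) = p k :=
    fun x => x.2
  refine ⟨{ toFun := fun x => ⟨Classical.choose (hmem x), (Classical.choose_spec (hmem x)).1⟩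
            invFun := fun i => ⟨p i, ⟨i, i.isLt, rfl⟩⟩
            left_inv := fun x => Subtype.ext ((Classical.choose_spec (hmem x)).2).symm
            right_inv := fun i => by
              apply Fin.ext
              have h := Classical.choose_spec (hmem ⟨p i, ⟨i, i.isLt, rfl⟩⟩)
              exact hp.1 _ _ h.1 i.isLt h.2.symm }, ?_⟩
  intro a b
  have ha := Classical.choose_spec (hmem a)
  have hb := Classical.choose_spec (hmem b)
  simp only [Equiv.coe_fn_mk, pathGraph_adj, comap_adj, Function.Embedding.coe_subtype]
  have hiff := hp.2 _ _ ha.1 hb.1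
  rw [← ha.2, ← hb.2] at hiff
  exact hiff.symm

lemma singleton_isInducedPathSet {V : Type} (G : SimpleGraph V) (v : V) :
    IsInducedPathSet G {v} := by
  have h1 : IPF G 1 (fun _ => v) := by
    constructor
    · intro i j hi hj _; omega
    · intro i j hi hj
      have hi0 : i = 0 := by omega
      have hj0 : j = 0 := by omega
      subst hi0; subst hj0
      simp [G.irrefl]
  have h2 := IPF_isInducedPathSet h1 le_rfl
  have hset : {x | ∃ k, k < 1 ∧ x = (fun _ : ℕ => v) k} = ({v} : Set V) := by
    ext x; simp
  rwa [hset] at h2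
end Aux


theorem statement_10 (n : ℕ) (hn : 4 ≤ n) :
    ∃ c : ℕ, ∀ (V : Type) [Fintype V] (G : SimpleGraph V),
      G.Connected →
      ¬ HasInducedCopy G (completeGraph (Fin n)) →
      ¬ HasInducedCopy G (_root_.starGraph n) →
      ¬ HasInducedCopy G (F1 n) →
      ¬ HasInducedCopy G (F2 n) →
      ¬ HasInducedCopy G (F4 n) →
      ¬ HasInducedCopy G (F5 n) →
      inpp G ≤ c := by
  classical
  refine ⟨2 * (Aux.Rnum (n-1) n + 1)^(5*((2*n-1)*(n+2)) + 5*n + 25) + 1, ?_⟩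
  intro V _ G hconn hK hS1 hF1 hF2 hF4 hF5
  classical
  haveI hne : Nonempty V := hconn.nonempty
  set D := Aux.Rnum (n-1) n with hD
  set ρ := 5*((2*n-1)*(n+2)) + 5*n + 25 with hρ
  obtain ⟨m, p, hp, hm1, hmax⟩ := Aux.exists_maxIPF G
  have hdeg : ∀ v : V, (Finset.univ.filter (fun w => G.Adj v w)).card ≤ D :=
    fun v => Aux.deg_le hn hK hS1 v
  set Sp : Set V := {x | ∃ k, k < m ∧ x = p k} with hSp
  have hSpPred : IsInducedPathSet G Sp := Aux.IPF_isInducedPathSet hp hm1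
  set rest : Finset V := Finset.univ.filter (fun v => ¬ (∃ k, k < m ∧ v = p k)) with hrest
  set P : Finset (Set V) := insert Sp (rest.image (fun v => ({v} : Set V))) with hPdef
  have hcover : IsCoverBy P (fun S => IsInducedPathSet G S) := by
    constructor
    · intro S hS
      rcases Finset.mem_insert.mp hS with h | h
      · rw [h]; exact hSpPred
      · obtain ⟨w, hw, rfl⟩ := Finset.mem_image.mp h
        exact Aux.singleton_isInducedPathSet G w
    · intro v
      by_cases hv : ∃ k, k < m ∧ v = p k
      · exact ⟨Sp, Finset.mem_insert_self _ _, hv⟩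
      · refine ⟨{v}, Finset.mem_insert_of_mem (Finset.mem_image.mpr ⟨v, ?_, rfl⟩), rfl⟩
        exact Finset.mem_filter.mpr ⟨Finset.mem_univ _, hv⟩
  have hdisj : ∀ S ∈ P, ∀ T ∈ P, S ≠ T → ∀ v, v ∈ S → v ∉ T := by
    intro S hS T hT hST v hvS hvT
    rcases Finset.mem_insert.mp hS with h1 | h1 <;> rcases Finset.mem_insert.mp hT with h2 | h2
    · exact hST (h1.trans h2.symm)
    · obtain ⟨w, hw, hwT⟩ := Finset.mem_image.mp h2
      subst h1
      rw [← hwT] at hvT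
      have e1 : v = w := hvT
      subst e1
      exact (Finset.mem_filter.mp hw).2 hvS
    · obtain ⟨w, hw, hwS⟩ := Finset.mem_image.mp h1
      subst h2
      rw [← hwS] at hvS
      have e1 : v = w := hvS
      subst e1
      exact (Finset.mem_filter.mp hw).2 hvT
    · obtain ⟨w, hw, hwS⟩ := Finset.mem_image.mp h1
      obtain ⟨w', hw', hwT⟩ := Finset.mem_image.mp h2
      rw [← hwS] at hvS
      rw [← hwT] at hvT
      have e1 : v = w := hvS
      have e2 : v = w' := hvT
      apply hST
      rw [← hwS, ← hwT, ← e1, ← e2]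
  have hinpp : inpp G ≤ P.card := Nat.sInf_le ⟨P, rfl, ⟨hcover, hdisj⟩⟩
  have hsub : rest ⊆ (Finset.univ.filter (fun v => G.dist (p 0) v ≤ ρ)) ∪
      (Finset.univ.filter (fun v => G.dist (p (m-1)) v ≤ ρ)) := by
    intro v hv
    rcases Aux.claimB hn hconn hS1 hF1 hF2 hF4 hF5 hp hm1 hmax v with h | h | h
    · exact absurd h (Finset.mem_filter.mp hv).2
    · exact Finset.mem_union_left _ (Finset.mem_filter.mpr ⟨Finset.mem_univ _, h⟩)
    · exact Finset.mem_union_right _ (Finset.mem_filter.mpr ⟨Finset.mem_univ _, h⟩)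
  have hb1 := Aux.ball_card hconn D hdeg (p 0) ρ
  have hb2 := Aux.ball_card hconn D hdeg (p (m-1)) ρ
  have hrestcard : rest.card ≤ (D+1)^ρ + (D+1)^ρ := by
    refine (Finset.card_le_card hsub).trans ?_
    refine (Finset.card_union_le _ _).trans ?_
    omega
  have hPcard : P.card ≤ 1 + rest.card := by
    refine (Finset.card_insert_le _ _).trans ?_
    have := Finset.card_image_le (s := rest) (f := fun v => ({v} : Set V))
    omega
  omega
end
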